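/- arXiv:0907.0513 — 3 statements merged into one kernel-verified Lean document; each statement's English description precedes it below -/
import Mathlib

section
/- G_1(n) = y_n(1), where y_n is the n-th Bessel polynomial. -/
/-- `E σ n k` is the number of partitions of `{1,…,k}` into exactly `n` blocks,
each of size between `1` and `σ+1`. -/
noncomputable def E (σ n k : ℕ) : ℕ :=
  Nat.card {P : Finpartition (Finset.univ : Finset (Fin k)) //
    P.parts.card = n ∧ ∀ b ∈ P.parts, b.card ≤ σ + 1}

/-- `G₁ n = Σ_{k=n}^{2n} E₁(n,k)`. -/
noncomputable def G1 (n : ℕ) : ℕ := ∑ k ∈ Finset.Icc n (2 * n), E 1 n k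

/-- The Bessel polynomial `y_n(z)`. -/
def bessel (n : ℕ) (z : ℚ) : ℚ :=
  ∑ i ∈ Finset.range (n + 1),
    (Nat.factorial (n + i) : ℚ) * z ^ i /
      ((Nat.factorial (n - i) : ℚ) * (Nat.factorial i : ℚ) * 2 ^ i)


open Finset

namespace Stmt8


variable {k i : ℕ}

/-- The pair block determined by an embedding at index `j`. -/
def pr (f : Fin i × Bool ↪ Fin k) (j : Fin i) : Finset (Fin k) := {f (j, false), f (j, true)}

lemma mem_pr {f : Fin i × Bool ↪ Fin k} {j : Fin i} {x : Fin k} :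
    x ∈ pr f j ↔ x = f (j, false) ∨ x = f (j, true) := by simp [pr]

lemma pr_ne (f : Fin i × Bool ↪ Fin k) (j : Fin i) : f (j, false) ≠ f (j, true) := by
  intro h; simpa using f.injective h

lemma card_pr (f : Fin i × Bool ↪ Fin k) (j : Fin i) : (pr f j).card = 2 := by
  rw [pr, card_insert_of_notMem (by simpa using pr_ne f j), card_singleton]

lemma pr_inj (f : Fin i × Bool ↪ Fin k) : Function.Injective (pr f) := by
  intro a b hab
  have : f (a, false) ∈ pr f b := hab ▸ (by simp [pr])
  rcases mem_pr.1 this with h | h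
  · exact congrArg Prod.fst (f.injective h)
  · exact absurd (congrArg Prod.snd (f.injective h)) (by simp)

/-- The parts of the partition induced by `f`. -/
def PParts (f : Fin i × Bool ↪ Fin k) : Finset (Finset (Fin k)) :=
  (univ.image (pr f)) ∪ ((univ.map f)ᶜ.image (fun x => ({x} : Finset (Fin k))))

lemma mem_PParts {f : Fin i × Bool ↪ Fin k} {b : Finset (Fin k)} :
    b ∈ PParts f ↔ (∃ j, b = pr f j) ∨ ∃ x, (∀ p, f p ≠ x) ∧ b = {x} := by
  simp [PParts, eq_comm]

/-- The induced finpartition. -/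
def ΦP (f : Fin i × Bool ↪ Fin k) : Finpartition (univ : Finset (Fin k)) where
  parts := PParts f
  supIndep := by
    rw [supIndep_iff_pairwiseDisjoint]
    intro a ha b hb hab
    simp only [coe_union, Set.mem_union, mem_coe] at ha hb
    show Disjoint a b
    rw [Finset.disjoint_left]
    intro x hxa hxb
    rcases mem_PParts.1 ha with ⟨j, rfl⟩ | ⟨y, hy, rfl⟩ <;>
      rcases mem_PParts.1 hb with ⟨j', rfl⟩ | ⟨y', hy', rfl⟩
    · apply hab
      have h1 := mem_pr.1 hxa
      have h2 := mem_pr.1 hxb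
      rcases h1 with h1 | h1 <;> rcases h2 with h2 | h2 <;>
        · subst h1
          exact congrArg (pr f) (congrArg Prod.fst (f.injective h2))
    · rcases mem_pr.1 hxa with h | h <;>
        · rw [mem_singleton] at hxb; subst hxb; exact hy' _ h.symm
    · rcases mem_pr.1 hxb with h | h <;>
        · rw [mem_singleton] at hxa; subst hxa; exact hy _ h.symm
    · rw [mem_singleton] at hxa hxb; exact hab (by rw [← hxa, ← hxb])
  sup_parts := by
    apply Finset.eq_univ_of_forall
    intro x
    rw [Finset.mem_sup]
    by_cases hx : ∃ p, f p = x
    · obtain ⟨⟨j, t⟩, rfl⟩ := hx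
      refine ⟨pr f j, mem_PParts.2 (Or.inl ⟨j, rfl⟩), ?_⟩
      cases t <;> simp [pr]
    · push_neg at hx
      exact ⟨{x}, mem_PParts.2 (Or.inr ⟨x, hx, rfl⟩), mem_singleton_self x⟩
  bot_notMem := by
    intro h
    rcases mem_PParts.1 h with ⟨j, hj⟩ | ⟨x, _, hx⟩
    · have := card_pr f j; rw [← hj] at this; simp at this
    · simpa using congrArg Finset.card hx

lemma card_PParts (f : Fin i × Bool ↪ Fin k) (h2 : 2 * i ≤ k) :
    (PParts f).card = k - i := by
  have hdisj : Disjoint (univ.image (pr f))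
      ((univ.map f)ᶜ.image (fun x => ({x} : Finset (Fin k)))) := by
    rw [Finset.disjoint_left]
    rintro b hb hb'
    obtain ⟨j, _, rfl⟩ := mem_image.1 hb
    obtain ⟨x, _, hx⟩ := mem_image.1 hb'
    have := card_pr f j
    rw [← hx] at this; simp at this
  rw [PParts, card_union_of_disjoint hdisj,
    card_image_of_injective _ (pr_inj f),
    card_image_of_injective _ (fun a b h => Finset.singleton_injective h),
    card_compl, card_map, card_univ, card_univ]
  simp only [Fintype.card_prod, Fintype.card_fin, Fintype.card_bool]
  omega

lemma card_le_PParts (f : Fin i × Bool ↪ Fin k) {b : Finset (Fin k)}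
    (hb : b ∈ PParts f) : b.card ≤ 2 := by
  rcases mem_PParts.1 hb with ⟨j, rfl⟩ | ⟨x, _, rfl⟩
  · exact (card_pr f j).le
  · simp

/-- The two-element blocks of a partition. -/
def BB (P : Finpartition (univ : Finset (Fin k))) : Finset (Finset (Fin k)) :=
  P.parts.filter (fun b => b.card = 2)

lemma BB_subset (P : Finpartition (univ : Finset (Fin k))) : BB P ⊆ P.parts :=
  filter_subset _ _

lemma BB_nonempty {P : Finpartition (univ : Finset (Fin k))} {b : Finset (Fin k)}
    (hb : b ∈ BB P) : b.Nonempty :=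
  Finset.card_pos.mp (by rw [(mem_filter.mp hb).2]; norm_num)

lemma card_BB {P : Finpartition (univ : Finset (Fin k))}
    (hn : P.parts.card = k - i) (h2 : 2 * i ≤ k)
    (hle : ∀ b ∈ P.parts, b.card ≤ 2) : (BB P).card = i := by
  classical
  have hsum : ∑ b ∈ P.parts, b.card = k := by
    rw [Finpartition.sum_card_parts]; simp
  rw [← sum_filter_add_sum_filter_not P.parts (fun b => b.card = 2)] at hsum
  have h1 : ∑ b ∈ P.parts.filter (fun b => b.card = 2), b.card
      = 2 * (BB P).card := by
    rw [Finset.sum_congr rfl (fun b hb => (Finset.mem_filter.1 hb).2)]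
    simp [BB, mul_comm]
  have h2' : ∑ b ∈ P.parts.filter (fun b => ¬ b.card = 2), b.card
      = (P.parts.filter (fun b => ¬ b.card = 2)).card := by
    rw [Finset.sum_congr rfl (fun b hb => ?_), Finset.sum_const, smul_eq_mul, mul_one]
    have hmem := (Finset.mem_filter.1 hb).1
    have := hle b hmem
    have hpos := Finset.card_pos.2 (P.nonempty_of_mem_parts hmem)
    have := (Finset.mem_filter.1 hb).2
    omega
  have h3 := card_filter_add_card_filter_not (s := P.parts)
    (fun b => b.card = 2)
  rw [h1, h2'] at hsum
  have : (P.parts.filter (fun b => b.card = 2)).card = (BB P).card := rfl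
  omega

lemma if_bool_eq {α : Type*} {x y : α} (hxy : x ≠ y) {t t' cj : Bool}
    (h : (if t = cj then x else y) = (if t' = cj then x else y)) : t = t' := by
  cases t <;> cases t' <;> cases cj <;> simp_all

lemma eq_pair_of_card_two {b : Finset (Fin k)} (h : b.card = 2) (hne : b.Nonempty) :
    b = {b.min' hne, b.max' hne} := by
  refine (Finset.eq_of_subset_of_card_le ?_ ?_).symm
  · intro x hx
    rw [mem_insert, mem_singleton] at hx
    rcases hx with rfl | rfl
    · exact b.min'_mem hne
    · exact b.max'_mem hne
  · have hne' : b.min' hne ≠ b.max' hne :=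
      ne_of_lt (b.min'_lt_max'_of_card (by omega))
    rw [h, card_insert_of_notMem (by simpa using hne'), card_singleton]

section Psi

variable (P : Finpartition (univ : Finset (Fin k)))

/-- Canonical ordering of the two-element blocks. -/
noncomputable def eB (hi : (BB P).card = i) : Fin i ≃ {x // x ∈ BB P} :=
  (Fintype.equivFinOfCardEq (by rw [Fintype.card_coe, hi])).symm

def loB (b : {x // x ∈ BB P}) : Fin k := b.1.min' (BB_nonempty b.2)

def hiB (b : {x // x ∈ BB P}) : Fin k := b.1.max' (BB_nonempty b.2)

lemma loB_mem (b : {x // x ∈ BB P}) : loB P b ∈ b.1 := b.1.min'_mem _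

lemma hiB_mem (b : {x // x ∈ BB P}) : hiB P b ∈ b.1 := b.1.max'_mem _

lemma loB_ne_hiB (b : {x // x ∈ BB P}) : loB P b ≠ hiB P b := by
  have hc : (1:ℕ) < b.1.card := by
    have := (mem_filter.1 b.2).2; omega
  exact ne_of_lt (b.1.min'_lt_max'_of_card hc)

lemma pair_loB_hiB (b : {x // x ∈ BB P}) :
    ({loB P b, hiB P b} : Finset (Fin k)) = b.1 :=
  (eq_pair_of_card_two (mem_filter.1 b.2).2 _).symm

variable (hi : (BB P).card = i)

/-- Auxiliary map realizing each fiber. -/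
noncomputable def ΨF (σ : Equiv.Perm (Fin i)) (c : Fin i → Bool) :
    Fin i × Bool ↪ Fin k :=
  ⟨fun p => if p.2 = c p.1 then loB P (eB P hi (σ p.1)) else hiB P (eB P hi (σ p.1)), by
    rintro ⟨j, t⟩ ⟨j', t'⟩ h
    simp only at h
    have hmem : ∀ (j : Fin i) (t : Bool),
        (if t = c j then loB P (eB P hi (σ j)) else hiB P (eB P hi (σ j)))
          ∈ ((eB P hi (σ j)) : {x // x ∈ BB P}).1 := by
      intro j t
      split
      · exact loB_mem P _
      · exact hiB_mem P _
    have h1 := hmem j t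
    have h2 := hmem j' t'
    rw [h] at h1
    have hbeq : ((eB P hi (σ j)) : {x // x ∈ BB P}).1 = ((eB P hi (σ j')) : {x // x ∈ BB P}).1 :=
      P.eq_of_mem_parts (BB_subset P (eB P hi (σ j)).2) (BB_subset P (eB P hi (σ j')).2) h1 h2
    have hj : j = j' := by
      have : (eB P hi (σ j)) = (eB P hi (σ j')) := Subtype.ext hbeq
      have := (eB P hi).injective this
      exact σ.injective this
    subst hj
    rw [if_bool_eq (loB_ne_hiB P _) h]⟩

lemma ΨF_apply (σ : Equiv.Perm (Fin i)) (c : Fin i → Bool) (j : Fin i) (t : Bool) :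
    ΨF P hi σ c (j, t)
      = if t = c j then loB P (eB P hi (σ j)) else hiB P (eB P hi (σ j)) := rfl

lemma pr_ΨF (σ : Equiv.Perm (Fin i)) (c : Fin i → Bool) (j : Fin i) :
    pr (ΨF P hi σ c) j = ((eB P hi (σ j)) : {x // x ∈ BB P}).1 := by
  rw [pr, ΨF_apply, ΨF_apply, ← pair_loB_hiB P (eB P hi (σ j))]
  cases hc : c j <;> simp [hc, Finset.pair_comm]

lemma image_pr_ΨF (σ : Equiv.Perm (Fin i)) (c : Fin i → Bool) :
    univ.image (pr (ΨF P hi σ c)) = BB P := by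
  ext b
  simp only [mem_image, mem_univ, true_and]
  constructor
  · rintro ⟨j, rfl⟩
    rw [pr_ΨF]
    exact (eB P hi (σ j)).2
  · intro hb
    refine ⟨σ.symm ((eB P hi).symm ⟨b, hb⟩), ?_⟩
    rw [pr_ΨF]
    simp

lemma mem_map_ΨF (σ : Equiv.Perm (Fin i)) (c : Fin i → Bool) (x : Fin k) :
    x ∈ univ.map (ΨF P hi σ c) ↔ ∃ b ∈ BB P, x ∈ b := by
  constructor
  · intro hx
    obtain ⟨⟨j, t⟩, _, rfl⟩ := mem_map.1 hx
    refine ⟨((eB P hi (σ j)) : {x // x ∈ BB P}).1, (eB P hi (σ j)).2, ?_⟩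
    rw [ΨF_apply]
    split
    · exact loB_mem P _
    · exact hiB_mem P _
  · rintro ⟨b, hb, hxb⟩
    set s : {x // x ∈ BB P} := ⟨b, hb⟩ with hs
    set j := σ.symm ((eB P hi).symm s) with hj
    have hsb : (eB P hi (σ j)) = s := by rw [hj]; simp
    have : x ∈ ({loB P s, hiB P s} : Finset (Fin k)) := by
      rw [pair_loB_hiB]; exact hxb
    rw [mem_insert, mem_singleton] at this
    rcases this with rfl | rfl
    · exact mem_map.2 ⟨(j, c j), mem_univ _, by rw [ΨF_apply, if_pos rfl, hsb]⟩
    · exact mem_map.2 ⟨(j, !(c j)), mem_univ _, by rw [ΨF_apply, if_neg (by simp), hsb]⟩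

lemma singles_ΨF (hle : ∀ b ∈ P.parts, b.card ≤ 2) (σ : Equiv.Perm (Fin i))
    (c : Fin i → Bool) :
    ((univ.map (ΨF P hi σ c))ᶜ).image (fun x => ({x} : Finset (Fin k)))
      = P.parts \ BB P := by
  ext s
  simp only [mem_image, Finset.mem_compl, mem_sdiff]
  constructor
  · rintro ⟨x, hx, rfl⟩
    rw [mem_map_ΨF] at hx
    push_neg at hx
    obtain ⟨p, hp, hxp⟩ := P.exists_mem (mem_univ x)
    have hpB : p ∉ BB P := fun h => hx p h hxp
    have hcard : p.card = 1 := by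
      have h1 := Finset.card_pos.2 (P.nonempty_of_mem_parts hp)
      have h2 := hle p hp
      have h3 : p.card ≠ 2 := fun h => hpB (mem_filter.2 ⟨hp, h⟩)
      omega
    obtain ⟨y, rfl⟩ := Finset.card_eq_one.1 hcard
    rw [mem_singleton] at hxp
    subst hxp
    exact ⟨hp, fun h => hx _ h (mem_singleton_self x)⟩
  · rintro ⟨hs, hsB⟩
    have hcard : s.card = 1 := by
      have h1 := Finset.card_pos.2 (P.nonempty_of_mem_parts hs)
      have h2 := hle s hs
      have h3 : s.card ≠ 2 := fun h => hsB (mem_filter.2 ⟨hs, h⟩)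
      omega
    obtain ⟨x, rfl⟩ := Finset.card_eq_one.1 hcard
    refine ⟨x, ?_, rfl⟩
    rw [mem_map_ΨF]
    rintro ⟨b, hb, hxb⟩
    have : ({x} : Finset (Fin k)) = b :=
      P.eq_of_mem_parts hs (BB_subset P hb) (mem_singleton_self x) hxb
    exact hsB (this ▸ hb)

lemma ΦP_ΨF (hle : ∀ b ∈ P.parts, b.card ≤ 2) (σ : Equiv.Perm (Fin i))
    (c : Fin i → Bool) : ΦP (ΨF P hi σ c) = P := by
  apply Finpartition.ext
  show PParts _ = P.parts
  rw [PParts, image_pr_ΨF, singles_ΨF P hi hle, union_sdiff_of_subset (BB_subset P)]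

lemma ΨF_injective (hle : ∀ b ∈ P.parts, b.card ≤ 2) :
    Function.Injective (fun p : Equiv.Perm (Fin i) × (Fin i → Bool) => ΨF P hi p.1 p.2) := by
  rintro ⟨σ, c⟩ ⟨σ', c'⟩ h
  simp only at h
  have happ : ∀ j t, ΨF P hi σ c (j, t) = ΨF P hi σ' c' (j, t) := fun j t => by rw [h]
  have hσ : σ = σ' := by
    apply Equiv.ext
    intro j
    have h1 := happ j (c j)
    rw [ΨF_apply, if_pos rfl] at h1
    have hmem : loB P (eB P hi (σ j)) ∈ ((eB P hi (σ' j)) : {x // x ∈ BB P}).1 := by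
      rw [h1, ΨF_apply]
      split
      · exact loB_mem P _
      · exact hiB_mem P _
    have hbeq : ((eB P hi (σ j)) : {x // x ∈ BB P}).1 = ((eB P hi (σ' j)) : {x // x ∈ BB P}).1 :=
      P.eq_of_mem_parts (BB_subset P (eB P hi (σ j)).2) (BB_subset P (eB P hi (σ' j)).2)
        (loB_mem P _) hmem
    exact (eB P hi).injective (Subtype.ext hbeq)
  subst hσ
  have hc : c = c' := by
    funext j
    by_contra hne
    have h1 := happ j (c j)
    rw [ΨF_apply, if_pos rfl, ΨF_apply, if_neg (fun h' => hne h')] at h1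
    exact loB_ne_hiB P _ h1
  rw [hc]

lemma ΨF_surjective (f : Fin i × Bool ↪ Fin k) (hf : ΦP f = P) :
    ∃ σ c, ΨF P hi σ c = f := by
  have hparts : P.parts = PParts f := by rw [← hf]; rfl
  have hBB : BB P = univ.image (pr f) := by
    ext b
    simp only [BB, mem_filter, hparts, mem_image, mem_univ, true_and]
    constructor
    · rintro ⟨hb, hcard⟩
      rcases mem_PParts.1 hb with ⟨j, rfl⟩ | ⟨x, _, rfl⟩
      · exact ⟨j, rfl⟩
      · simp at hcard
    · rintro ⟨j, rfl⟩
      exact ⟨mem_PParts.2 (Or.inl ⟨j, rfl⟩), card_pr f j⟩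
  have hprB : ∀ j, pr f j ∈ BB P := fun j => by
    rw [hBB]; exact mem_image.2 ⟨j, mem_univ _, rfl⟩
  set g : Fin i → {x // x ∈ BB P} := fun j => ⟨pr f j, hprB j⟩ with hg
  have hginj : Function.Injective g := fun a b hab =>
    pr_inj f (congrArg Subtype.val hab)
  set σ0 : Fin i → Fin i := fun j => (eB P hi).symm (g j) with hσ0
  have hσinj : Function.Injective σ0 := fun a b hab =>
    hginj ((eB P hi).symm.injective hab)
  set σ : Equiv.Perm (Fin i) :=
    Equiv.ofBijective σ0 (Finite.injective_iff_bijective.1 hσinj) with hσ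
  have hσapp : ∀ j, (eB P hi (σ j)) = g j := fun j => by
    show (eB P hi) ((eB P hi).symm (g j)) = g j
    simp
  have hprne : ∀ j, (pr f j).Nonempty := fun j =>
    Finset.card_pos.mp (by rw [card_pr]; norm_num)
  set c : Fin i → Bool := fun j =>
    if f (j, false) = (pr f j).min' (hprne j) then false else true with hc
  refine ⟨σ, c, ?_⟩
  apply DFunLike.ext
  rintro ⟨j, t⟩
  rw [ΨF_apply]
  have hlo : loB P (eB P hi (σ j)) = (pr f j).min' (hprne j) := by
    rw [hσapp]; rfl
  have hhi : hiB P (eB P hi (σ j)) = (pr f j).max' (hprne j) := by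
    rw [hσapp]; rfl
  have hpair : pr f j = {(pr f j).min' (hprne j), (pr f j).max' (hprne j)} :=
    eq_pair_of_card_two (card_pr f j) (hprne j)
  have hmm : (pr f j).min' (hprne j) ≠ (pr f j).max' (hprne j) := by
    have hcard : (1:ℕ) < (pr f j).card := by rw [card_pr]; norm_num
    exact ne_of_lt ((pr f j).min'_lt_max'_of_card hcard)
  have hmem : ∀ t : Bool, f (j, t) ∈ ({(pr f j).min' (hprne j), (pr f j).max' (hprne j)}
      : Finset (Fin k)) := fun t => by
    rw [← hpair]; cases t <;> simp [pr]
  by_cases hff : f (j, false) = (pr f j).min' (hprne j)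
  · have hcj : c j = false := by rw [hc]; simp [hff]
    have hft : f (j, true) = (pr f j).max' (hprne j) := by
      have := hmem true
      rw [mem_insert, mem_singleton] at this
      rcases this with h | h
      · exact absurd (f.injective (hff ▸ h : f (j, true) = f (j, false)))
          (by simp)
      · exact h
    cases t
    · rw [if_pos (by rw [hcj]), hlo, hff]
    · rw [if_neg (by rw [hcj]; simp), hhi, hft]
  · have hcj : c j = true := by rw [hc]; simp [hff]
    have hft : f (j, true) = (pr f j).min' (hprne j) := by
      have := hmem true
      rw [mem_insert, mem_singleton] at this
      rcases this with h | h
      · exact h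
      · exfalso
        have hffmem := hmem false
        rw [mem_insert, mem_singleton] at hffmem
        rcases hffmem with h' | h'
        · exact hff h'
        · exact absurd (f.injective (h ▸ h' : f (j, false) = f (j, true))) (by simp)
    have hffmax : f (j, false) = (pr f j).max' (hprne j) := by
      have := hmem false
      rw [mem_insert, mem_singleton] at this
      rcases this with h' | h'
      · exact absurd h' hff
      · exact h'
    cases t
    · rw [if_neg (by rw [hcj]; simp), hhi, hffmax]
    · rw [if_pos (by rw [hcj]), hlo, hft]

end Psi

lemma key (k i : ℕ) (h2 : 2 * i ≤ k) :
    Nat.card {P : Finpartition (univ : Finset (Fin k)) //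
        P.parts.card = k - i ∧ ∀ b ∈ P.parts, b.card ≤ 2}
      * (Nat.factorial i * 2 ^ i) = k.descFactorial (2 * i) := by
  classical
  set Pt := {P : Finpartition (univ : Finset (Fin k)) //
    P.parts.card = k - i ∧ ∀ b ∈ P.parts, b.card ≤ 2} with hPt
  have hΦ : ∀ f : Fin i × Bool ↪ Fin k,
      (ΦP f).parts.card = k - i ∧ ∀ b ∈ (ΦP f).parts, b.card ≤ 2 :=
    fun f => ⟨card_PParts f h2, fun b hb => card_le_PParts f hb⟩
  set Φ' : (Fin i × Bool ↪ Fin k) → Pt := fun f => ⟨ΦP f, hΦ f⟩ with hΦ'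
  have hcEmb : Fintype.card (Fin i × Bool ↪ Fin k) = k.descFactorial (2 * i) := by
    rw [Fintype.card_embedding_eq]
    congr 1 <;> simp [mul_comm]
  have hfiber : ∀ P : Pt, Fintype.card {f // Φ' f = P}
      = Nat.factorial i * 2 ^ i := by
    intro P
    have hiP : (BB P.1).card = i := card_BB P.2.1 h2 P.2.2
    have hbij : Function.Bijective
        (fun p : Equiv.Perm (Fin i) × (Fin i → Bool) =>
          (⟨ΨF P.1 hiP p.1 p.2, Subtype.ext (ΦP_ΨF P.1 hiP P.2.2 p.1 p.2)⟩
            : {f // Φ' f = P})) := by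
      constructor
      · intro a b hab
        exact ΨF_injective P.1 hiP P.2.2 (congrArg Subtype.val hab)
      · rintro ⟨f, hf⟩
        obtain ⟨σ, c, hσc⟩ := ΨF_surjective P.1 hiP f (congrArg Subtype.val hf)
        exact ⟨(σ, c), Subtype.ext hσc⟩
    rw [← Fintype.card_of_bijective hbij, Fintype.card_prod, Fintype.card_perm,
      Fintype.card_fun]
    simp
  have hsum : Fintype.card (Fin i × Bool ↪ Fin k)
      = ∑ P : Pt, Fintype.card {f // Φ' f = P} := by
    rw [← Fintype.card_sigma]
    exact (Fintype.card_congr (Equiv.sigmaFiberEquiv Φ')).symm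
  rw [hcEmb, Finset.sum_congr rfl (fun P _ => hfiber P), Finset.sum_const,
    smul_eq_mul, card_univ] at hsum
  rw [Nat.card_eq_fintype_card, ← hsum]

end Stmt8





theorem stmt_8 (n : ℕ) : (G1 n : ℚ) = bessel n 1 := by
  have hE : ∀ i : ℕ, i ≤ n → (E 1 n (n + i) : ℚ)
      = (Nat.factorial (n + i) : ℚ) /
        ((Nat.factorial (n - i) : ℚ) * (Nat.factorial i : ℚ) * 2 ^ i) := by
    intro i hi
    have h2 : 2 * i ≤ n + i := by omega
    have hkey := Stmt8.key (n + i) i h2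
    rw [show n + i - i = n by omega] at hkey
    have hEeq : E 1 n (n + i) = Nat.card {P : Finpartition (univ : Finset (Fin (n + i))) //
        P.parts.card = n ∧ ∀ b ∈ P.parts, b.card ≤ 2} := rfl
    rw [← hEeq] at hkey
    have hdf : (n - i).factorial * (n + i).descFactorial (2 * i) = (n + i).factorial := by
      have := Nat.factorial_mul_descFactorial (n := n + i) (k := 2 * i) h2
      rwa [show n + i - 2 * i = n - i by omega] at this
    have hnat : E 1 n (n + i) * (Nat.factorial i * 2 ^ i) * Nat.factorial (n - i)
        = Nat.factorial (n + i) := by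
      rw [hkey, mul_comm, hdf]
    have hden : ((Nat.factorial (n - i) : ℚ) * (Nat.factorial i : ℚ) * 2 ^ i) ≠ 0 := by
      positivity
    rw [eq_div_iff hden]
    push_cast [← hnat]
    ring
  have hsum : (G1 n : ℚ) = ∑ i ∈ range (n + 1), (E 1 n (n + i) : ℚ) := by
    rw [G1]
    push_cast
    rw [← Finset.Ico_add_one_right_eq_Icc, Finset.sum_Ico_eq_sum_range,
      show 2 * n + 1 - n = n + 1 by omega]
  rw [hsum, bessel]
  refine Finset.sum_congr rfl fun i hi => ?_
  rw [mem_range] at hi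
  rw [hE i (by omega), one_pow, mul_one]
end

section
/- For n ≥ 3: 2(n-2)·G_2(n) = n(9n²-27n+17)·G_2(n-1) + (12n²-30n+13)·G_2(n-2) + 5(n-1)·G_2(n-3), with G_2(0)=1, G_2(1)=3, G_2(2)=31. -/
/-- `G₂ n = Σ_{k=n}^{3n} E₂(n,k)`. -/
noncomputable def G2 (n : ℕ) : ℕ := ∑ k ∈ Finset.Icc n (3 * n), E 2 n k



def tN : ℕ → ℕ → ℕ
  | 0, 0 => 1
  | 0, _+1 => 0
  | _+1, 0 => 0
  | n+1, k+1 => tN n k + k * tN n (k-1) + (k.choose 2) * tN n (k-2)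

noncomputable def tz (n : ℕ) (k : ℤ) : ℤ := if 0 ≤ k then 2^n * tN n k.toNat else 0

lemma tz_neg {n : ℕ} {k : ℤ} (h : k < 0) : tz n k = 0 := by simp [tz, not_le.2 h]

lemma tz_ofNat (n m : ℕ) : tz n (m : ℤ) = 2^n * tN n m := by simp [tz]

lemma two_choose_two (m : ℕ) : 2 * m.choose 2 = m * (m-1) := by
  rcases m with _ | j
  · rfl
  · rw [Nat.choose_two_right, Nat.succ_sub_one,
      Nat.mul_div_cancel' (by rw [Nat.mul_comm]; exact (Nat.even_mul_succ_self j).two_dvd)]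

lemma tz_rec (n : ℕ) (k : ℤ) :
    tz (n+1) k = 2 * tz n (k-1) + 2*(k-1) * tz n (k-2) + (k-1)*(k-2) * tz n (k-3) := by
  rcases lt_or_ge k 0 with hk | hk
  · rw [tz_neg hk, tz_neg (by omega), tz_neg (by omega), tz_neg (by omega)]; ring
  rcases eq_or_lt_of_le hk with rfl | hk'
  · rw [show tz n ((0:ℤ)-1) = 0 from tz_neg (by omega), show tz n ((0:ℤ)-2) = 0 from tz_neg (by omega),
      show tz n ((0:ℤ)-3) = 0 from tz_neg (by omega)]
    simp [tz, tN]
  obtain ⟨m, rfl⟩ : ∃ m : ℕ, k = (m : ℤ) + 1 := ⟨(k-1).toNat, by omega⟩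
  rcases m with _ | _ | j
  · rw [show ((0:ℕ):ℤ) + 1 = ((1:ℕ):ℤ) by norm_num]
    rw [show ((1:ℕ):ℤ) - 1 = ((0:ℕ):ℤ) by norm_num, show ((1:ℕ):ℤ) - 2 = (-1:ℤ) by norm_num,
      show ((1:ℕ):ℤ) - 3 = (-2:ℤ) by norm_num, tz_ofNat, tz_ofNat,
      show tz n (-1:ℤ) = 0 from tz_neg (by norm_num), show tz n (-2:ℤ) = 0 from tz_neg (by norm_num)]
    show (2:ℤ)^(n+1) * tN (n+1) (0+1) = _
    rw [tN]
    norm_num [Nat.choose]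
    push_cast
    ring
  · rw [show ((1:ℕ):ℤ) + 1 = ((2:ℕ):ℤ) by norm_num]
    rw [show ((2:ℕ):ℤ) - 1 = ((1:ℕ):ℤ) by norm_num, show ((2:ℕ):ℤ) - 2 = ((0:ℕ):ℤ) by norm_num,
      show ((2:ℕ):ℤ) - 3 = (-1:ℤ) by norm_num, tz_ofNat, tz_ofNat, tz_ofNat,
      show tz n (-1:ℤ) = 0 from tz_neg (by norm_num)]
    show (2:ℤ)^(n+1) * tN (n+1) (1+1) = _
    rw [tN]
    show (2:ℤ)^(n+1) * (tN n 1 + 1 * tN n 0 + Nat.choose 1 2 * tN n 0) = _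
    norm_num
    push_cast
    ring
  · rw [show ((j+2:ℕ):ℤ) + 1 = ((j+3:ℕ):ℤ) by push_cast; ring]
    rw [show ((j+3:ℕ):ℤ) - 1 = ((j+2:ℕ):ℤ) by push_cast; ring,
      show ((j+3:ℕ):ℤ) - 2 = ((j+1:ℕ):ℤ) by push_cast; ring,
      show ((j+3:ℕ):ℤ) - 3 = ((j:ℕ):ℤ) by push_cast; ring,
      tz_ofNat, tz_ofNat, tz_ofNat, tz_ofNat]
    show (2:ℤ)^(n+1) * tN (n+1) ((j+2)+1) = _
    rw [tN]
    show (2:ℤ)^(n+1) * (tN n (j+2) + (j+2) * tN n (j+1) + Nat.choose (j+2) 2 * tN n j) = _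
    have hnat : 2 * (j+2).choose 2 = (j+2) * (j+1) := by simpa using two_choose_two (j+2)
    have h2 : (2:ℤ) * ((j+2).choose 2 : ℤ) = ((j:ℤ)+2) * ((j:ℤ)+1) := by exact_mod_cast hnat
    push_cast
    linear_combination (2:ℤ)^n * (tN n j : ℤ) * h2

lemma tN_lt : ∀ n k : ℕ, k < n → tN n k = 0 := by
  intro n
  induction n with
  | zero => omega
  | succ m ih =>
    intro k hk
    rcases k with _ | j
    · rfl
    · rw [tN, ih j (by omega), ih (j-1) (by omega), ih (j-2) (by omega)]
      ring

lemma tN_gt : ∀ n k : ℕ, 3*n < k → tN n k = 0 := by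
  intro n
  induction n with
  | zero => intro k hk; rcases k with _ | j; · omega
            · rfl
  | succ m ih =>
    intro k hk
    rcases k with _ | j
    · omega
    · rw [tN, ih j (by omega), ih (j-1) (by omega), ih (j-2) (by omega)]
      ring

lemma tz_gt {m : ℕ} {k : ℤ} (h : 3*(m:ℤ) < k) : tz m k = 0 := by
  rw [tz, if_pos (by omega)]
  rw [tN_gt m k.toNat (by omega)]
  ring

lemma tz_zero_ne {k : ℤ} (h : k ≠ 0) : tz 0 k = 0 := by
  rcases lt_or_gt_of_ne h with h1 | h1
  · exact tz_neg h1
  · rw [tz, if_pos (by omega)]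
    obtain ⟨j, hj⟩ : ∃ j, k.toNat = j + 1 := ⟨k.toNat - 1, by omega⟩
    rw [hj]
    rfl

lemma rel : ∀ (m : ℕ) (k : ℤ),
    (6*k - 6*(m:ℤ)) * tz m k + (3*k*(k-1) - 6*(m:ℤ)*k) * tz m (k-1)
      + (k*(k-1)*(k-2) - 3*(m:ℤ)*k*(k-1)) * tz m (k-2) = 0 := by
  intro m
  induction m with
  | zero =>
    intro k
    rcases eq_or_ne k 0 with rfl | h0
    · rw [tz_zero_ne (by norm_num : (0:ℤ)-1 ≠ 0), tz_zero_ne (by norm_num : (0:ℤ)-2 ≠ 0)]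
      norm_num
    rcases eq_or_ne k 1 with rfl | h1
    · rw [tz_zero_ne (by norm_num : (1:ℤ) ≠ 0), tz_zero_ne (by norm_num : (1:ℤ)-2 ≠ 0)]
      norm_num
    rcases eq_or_ne k 2 with rfl | h2
    · rw [tz_zero_ne (by norm_num : (2:ℤ) ≠ 0), tz_zero_ne (by norm_num : (2:ℤ)-1 ≠ 0)]
      norm_num
    · rw [tz_zero_ne h0, tz_zero_ne (by omega : k-1 ≠ 0), tz_zero_ne (by omega : k-2 ≠ 0)]
      ring
  | succ m ih =>
    intro k
    push_cast
    linear_combination (norm := ring_nf)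
      (6*k - 6*((m:ℤ)+1)) * tz_rec m k
      + (3*k*(k-1) - 6*((m:ℤ)+1)*k) * tz_rec m (k-1)
      + (k*(k-1)*(k-2) - 3*((m:ℤ)+1)*k*(k-1)) * tz_rec m (k-2)
      + 2 * ih (k-1) + 2*k * ih (k-2) + (k^2-k) * ih (k-3)

set_option maxHeartbeats 2000000 in
noncomputable def W (m : ℕ) (y : ℤ) : ℤ :=
  ((-80) + (-40)*(m:ℤ)) * tz m (y-1)  +
  ((-328) + (-376)*(m:ℤ) + (-96)*(m:ℤ)^2) * tz m (y-2)  +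
  ((-240) + (-248)*y + (-488)*(m:ℤ) + (-336)*(m:ℤ)*y + (-336)*(m:ℤ)^2 + (-96)*(m:ℤ)^2*y + (-72)*(m:ℤ)^3) * tz m (y-3)  +
  ((1320) + (-444)*y + (-124)*y^2 + (2776)*(m:ℤ) + (-1064)*(m:ℤ)*y + (-168)*(m:ℤ)*y^2 + (1632)*(m:ℤ)^2 + (-720)*(m:ℤ)^2*y + (-48)*(m:ℤ)^2*y^2 + (288)*(m:ℤ)^3 + (-144)*(m:ℤ)^3*y) * tz m (y-4)  +
  ((-5440) + (4748)*y + (-940)*y^2 + (-9800)*(m:ℤ) + (8728)*(m:ℤ)*y + (-1736)*(m:ℤ)*y^2 + (-5040)*(m:ℤ)^2 + (4560)*(m:ℤ)^2*y + (-912)*(m:ℤ)^2*y^2 + (-792)*(m:ℤ)^3 + (720)*(m:ℤ)^3*y + (-144)*(m:ℤ)^3*y^2) * tz m (y-5)  +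
  ((3984) + (-7952)*y + (3416)*y^2 + (-408)*y^3 + (8008)*(m:ℤ) + (-15352)*(m:ℤ)*y + (6568)*(m:ℤ)*y^2 + (-784)*(m:ℤ)*y^3 + (4608)*(m:ℤ)^2 + (-8520)*(m:ℤ)^2*y + (3624)*(m:ℤ)^2*y^2 + (-432)*(m:ℤ)^2*y^3 + (864)*(m:ℤ)^3 + (-1476)*(m:ℤ)^3*y + (612)*(m:ℤ)^3*y^2 + (-72)*(m:ℤ)^3*y^3) * tz m (y-6)  +
  ((-5992) + (8920)*y + (-5410)*y^2 + (1288)*y^3 + (-102)*y^4 + (-7960)*(m:ℤ) + (14392)*(m:ℤ)*y + (-9684)*(m:ℤ)*y^2 + (2416)*(m:ℤ)*y^3 + (-196)*(m:ℤ)*y^4 + (-2256)*(m:ℤ)^2 + (6264)*(m:ℤ)^2*y + (-4908)*(m:ℤ)^2*y^2 + (1296)*(m:ℤ)^2*y^3 + (-108)*(m:ℤ)^2*y^4 + (-216)*(m:ℤ)^3 + (972)*(m:ℤ)^3*y + (-810)*(m:ℤ)^3*y^2 + (216)*(m:ℤ)^3*y^3 + (-18)*(m:ℤ)^3*y^4)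 * tz m (y-7)  +
  ((-11360) + (12924)*y + (-5738)*y^2 + (1048)*y^3 + (-66)*y^4 + (-24296)*(m:ℤ) + (30704)*(m:ℤ)*y + (-13960)*(m:ℤ)*y^2 + (2552)*(m:ℤ)*y^3 + (-160)*(m:ℤ)*y^4 + (-14832)*(m:ℤ)^2 + (20400)*(m:ℤ)^2*y + (-9444)*(m:ℤ)^2*y^2 + (1728)*(m:ℤ)^2*y^3 + (-108)*(m:ℤ)^2*y^4 + (-2232)*(m:ℤ)^3 + (3312)*(m:ℤ)^3*y + (-1566)*(m:ℤ)^3*y^2 + (288)*(m:ℤ)^3*y^3 + (-18)*(m:ℤ)^3*y^4) * tz m (y-8)  +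
  ((-52576) + (55096)*y + (-22178)*y^2 + (4172)*y^3 + (-366)*y^4 + (12)*y^5 + (-93112)*(m:ℤ) + (94208)*(m:ℤ)*y + (-35476)*(m:ℤ)*y^2 + (6052)*(m:ℤ)*y^3 + (-460)*(m:ℤ)*y^4 + (12)*(m:ℤ)*y^5 + (-46512)*(m:ℤ)^2 + (44904)*(m:ℤ)^2*y + (-15276)*(m:ℤ)^2*y^2 + (2160)*(m:ℤ)^2*y^3 + (-108)*(m:ℤ)^2*y^4 + (-7416)*(m:ℤ)^3 + (7380)*(m:ℤ)^3*y + (-2538)*(m:ℤ)^3*y^2 + (360)*(m:ℤ)^3*y^3 + (-18)*(m:ℤ)^3*y^4) * tz m (y-9)  +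
  ((-89280) + (73388)*y + (-17186)*y^2 + (154)*y^3 + (432)*y^4 + (-54)*y^5 + (2)*y^6 + (-165960)*(m:ℤ) + (138464)*(m:ℤ)*y + (-35944)*(m:ℤ)*y^2 + (2386)*(m:ℤ)*y^3 + (338)*(m:ℤ)*y^4 + (-54)*(m:ℤ)*y^5 + (2)*(m:ℤ)*y^6 + (-90288)*(m:ℤ)^2 + (75588)*(m:ℤ)^2*y + (-21648)*(m:ℤ)^2*y^2 + (2568)*(m:ℤ)^2*y^3 + (-108)*(m:ℤ)^2*y^4 + (-16200)*(m:ℤ)^3 + (13140)*(m:ℤ)^3*y + (-3690)*(m:ℤ)^3*y^2 + (432)*(m:ℤ)^3*y^3 + (-18)*(m:ℤ)^3*y^4) * tz m (y-10)  +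
  ((-285120) + (131652)*y + (-10514)*y^2 + (-3900)*y^3 + (912)*y^4 + (-72)*y^5 + (2)*y^6 + (-556920)*(m:ℤ) + (288392)*(m:ℤ)*y + (-43510)*(m:ℤ)*y^2 + (-896)*(m:ℤ)*y^3 + (812)*(m:ℤ)*y^4 + (-72)*(m:ℤ)*y^5 + (2)*(m:ℤ)*y^6 + (-308880)*(m:ℤ)^2 + (178068)*(m:ℤ)^2*y + (-37518)*(m:ℤ)^2*y^2 + (3420)*(m:ℤ)^2*y^3 + (-114)*(m:ℤ)^2*y^4 + (-48600)*(m:ℤ)^3 + (28080)*(m:ℤ)^3*y + (-5922)*(m:ℤ)^3*y^2 + (540)*(m:ℤ)^3*y^3 + (-18)*(m:ℤ)^3*y^4) * tz m (y-11)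

set_option maxHeartbeats 4000000 in
lemma master (m : ℕ) (k : ℤ) :
    ((2) + (2)*(m:ℤ)) * tz (m+3) k + ((-102) + (-196)*(m:ℤ) + (-108)*(m:ℤ)^2 + (-18)*(m:ℤ)^3) * tz (m+2) k
    + ((-124) + (-168)*(m:ℤ) + (-48)*(m:ℤ)^2) * tz (m+1) k + ((-80) + (-40)*(m:ℤ)) * tz m k
    = W m (k+1) - W m k := by
  simp only [W]
  linear_combination (norm := ring_nf) ((2) + (2)*(m:ℤ)) * tz_rec (m+2) k
    + ((-102) + (-196)*(m:ℤ) + (-108)*(m:ℤ)^2 + (-18)*(m:ℤ)^3) * tz_rec (m+1) k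
    + ((4) + (4)*(m:ℤ)) * tz_rec (m+1) (k-1)
    + ((-4) + (4)*k + (-4)*(m:ℤ) + (4)*(m:ℤ)*k) * tz_rec (m+1) (k-2)
    + ((4) + (-6)*k + (2)*k^2 + (4)*(m:ℤ) + (-6)*(m:ℤ)*k + (2)*(m:ℤ)*k^2) * tz_rec (m+1) (k-3)
    + ((-124) + (-168)*(m:ℤ) + (-48)*(m:ℤ)^2) * tz_rec m k
    + ((-204) + (-392)*(m:ℤ) + (-216)*(m:ℤ)^2 + (-36)*(m:ℤ)^3) * tz_rec m (k-1)
    + ((212) + (-204)*k + (400)*(m:ℤ) + (-392)*(m:ℤ)*k + (216)*(m:ℤ)^2 + (-216)*(m:ℤ)^2*k + (36)*(m:ℤ)^3 + (-36)*(m:ℤ)^3*k) * tz_rec m (k-2)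
    + ((-228) + (322)*k + (-102)*k^2 + (-416)*(m:ℤ) + (604)*(m:ℤ)*k + (-196)*(m:ℤ)*k^2 + (-216)*(m:ℤ)^2 + (324)*(m:ℤ)^2*k + (-108)*(m:ℤ)^2*k^2 + (-36)*(m:ℤ)^3 + (54)*(m:ℤ)^3*k + (-18)*(m:ℤ)^3*k^2) * tz_rec m (k-3)
    + ((56) + (-64)*k + (16)*k^2 + (56)*(m:ℤ) + (-64)*(m:ℤ)*k + (16)*(m:ℤ)*k^2) * tz_rec m (k-4)
    + ((-80) + (132)*k + (-60)*k^2 + (8)*k^3 + (-80)*(m:ℤ) + (132)*(m:ℤ)*k + (-60)*(m:ℤ)*k^2 + (8)*(m:ℤ)*k^3) * tz_rec m (k-5)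
    + ((80) + (-156)*k + (98)*k^2 + (-24)*k^3 + (2)*k^4 + (80)*(m:ℤ) + (-156)*(m:ℤ)*k + (98)*(m:ℤ)*k^2 + (-24)*(m:ℤ)*k^3 + (2)*(m:ℤ)*k^4) * tz_rec m (k-6)
    + ((288) + (-46)*k + (-12)*k^2 + (2)*k^3 + (484)*(m:ℤ) + (-116)*(m:ℤ)*k + (-6)*(m:ℤ)*k^2 + (2)*(m:ℤ)*k^3 + (180)*(m:ℤ)^2 + (-66)*(m:ℤ)^2*k + (6)*(m:ℤ)^2*k^2) * rel m (k-9)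

open Finset

variable {α : Type*} [DecidableEq α]

lemma avoid_parts_of_mem {s : Finset α} (P : Finpartition s) {b : Finset α} (hb : b ∈ P.parts) :
    (P.avoid b).parts = P.parts.erase b := by
  ext c
  rw [Finpartition.mem_avoid, mem_erase]
  constructor
  · rintro ⟨d, hd, hdb, rfl⟩
    have hne : d ≠ b := by rintro rfl; exact hdb le_rfl
    have hdisj : Disjoint d b := P.disjoint hd hb hne
    rw [hdisj.sdiff_eq_left]
    exact ⟨hne, hd⟩
  · rintro ⟨hcb, hc⟩
    have hdisj : Disjoint c b := P.disjoint hc hb hcb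
    exact ⟨c, hc, fun hle => (P.ne_bot hc) (hdisj.eq_bot_of_le hle), hdisj.sdiff_eq_left⟩

/-- number of b with a ∈ b ⊆ s and b.card = j+1 is (s.card - 1).choose j -/
lemma count_blocks {s : Finset α} {a : α} (ha : a ∈ s) (j : ℕ) :
    ((s.powerset.filter fun b => a ∈ b ∧ b.card = j + 1)).card = (s.card - 1).choose j := by
  rw [← Finset.card_erase_of_mem ha, ← Finset.card_powersetCard]
  apply card_nbij' (fun b => b.erase a) (fun c => insert a c)
  · intro b hb
    simp only [mem_coe, mem_filter, mem_powerset] at hb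
    rw [mem_coe, mem_powersetCard]
    exact ⟨fun x hx => mem_erase.2 ⟨(mem_erase.1 hx).1, hb.1 (mem_erase.1 hx).2⟩,
      by rw [card_erase_of_mem hb.2.1, hb.2.2]; omega⟩
  · intro c hc
    rw [mem_coe, mem_powersetCard] at hc
    have hac : a ∉ c := fun h => (mem_erase.1 (hc.1 h)).1 rfl
    simp only [mem_coe, mem_filter, mem_powerset]
    refine ⟨insert_subset ha (hc.1.trans (erase_subset _ _)), mem_insert_self _ _, ?_⟩
    rw [card_insert_of_notMem hac, hc.2]
  · intro b hb
    simp only [mem_coe, mem_filter, mem_powerset] at hb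
    exact insert_erase hb.2.1
  · intro c hc
    rw [mem_coe, mem_powersetCard] at hc
    exact erase_insert (fun h => (mem_erase.1 (hc.1 h)).1 rfl)

lemma count_partitions : ∀ (m : ℕ) (s : Finset α), s.card = m → ∀ (n : ℕ),
    Nat.card {P : Finpartition s // P.parts.card = n ∧ ∀ b ∈ P.parts, b.card ≤ 3} = tN n m := by
  intro m
  induction m using Nat.strong_induction_on with
  | _ m ih =>
  intro s hs n
  rcases m with _ | m
  · -- s = ∅
    rw [card_eq_zero] at hs
    subst hs
    have hparts : ∀ P : Finpartition (∅ : Finset α), P.parts = ∅ := fun P =>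
      Finpartition.parts_eq_empty_iff.2 Finset.bot_eq_empty.symm
    rcases n with _ | n
    · have h1 : Nat.card {P : Finpartition (∅ : Finset α) //
          P.parts.card = 0 ∧ ∀ b ∈ P.parts, b.card ≤ 3} = 1 := by
        rw [Nat.card_eq_one_iff_unique]
        constructor
        · constructor
          intro ⟨P, _⟩ ⟨Q, _⟩
          have : P = Q := Finpartition.ext (by rw [hparts P, hparts Q])
          simp [this]
        · refine ⟨⟨(Finpartition.empty (Finset α)).copy Finset.bot_eq_empty, ?_⟩⟩
          constructor
          · rw [Finpartition.copy_parts]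
            simp [Finpartition.empty]
          · intro b hb
            rw [Finpartition.copy_parts] at hb
            simp [Finpartition.empty] at hb
      exact h1
    · have : IsEmpty {P : Finpartition (∅ : Finset α) //
          P.parts.card = n + 1 ∧ ∀ b ∈ P.parts, b.card ≤ 3} := by
        constructor
        rintro ⟨P, hP, -⟩
        rw [hparts P] at hP
        simp at hP
      rw [Nat.card_of_isEmpty]
      rfl
  · -- s nonempty
    have hsne : s.Nonempty := card_pos.1 (by omega)
    obtain ⟨a, ha⟩ := hsne
    rcases n with _ | n
    · -- no partition into 0 parts
      have : IsEmpty {P : Finpartition s // P.parts.card = 0 ∧ ∀ b ∈ P.parts, b.card ≤ 3} := by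
        constructor
        rintro ⟨P, hP, -⟩
        rw [card_eq_zero, P.parts_eq_empty_iff] at hP
        rw [hP] at ha
        exact notMem_empty a ha
      rw [Nat.card_of_isEmpty]
      rfl
    · rw [Nat.card_eq_fintype_card, Fintype.card_subtype]
      set p : Finpartition s → Prop :=
        fun P => P.parts.card = n + 1 ∧ ∀ b ∈ P.parts, b.card ≤ 3 with hp
      set B : Finset (Finset α) := s.powerset.filter (fun b => a ∈ b ∧ b.card ≤ 3) with hB
      have key : ∀ P ∈ univ.filter p, P.part a ∈ B := by
        intro P hP
        rw [mem_filter] at hP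
        rw [hB, mem_filter, mem_powerset]
        exact ⟨P.le (P.part_mem.2 ha), P.mem_part ha, hP.2.2 _ (P.part_mem.2 ha)⟩
      rw [card_eq_sum_card_fiberwise key]
      have fib : ∀ b ∈ B, ((univ.filter p).filter (fun P => P.part a = b)).card
          = tN n (m + 1 - b.card) := by
        intro b hb
        rw [hB, mem_filter, mem_powerset] at hb
        obtain ⟨hbs, hab, hb3⟩ := hb
        have hbne : b ≠ ⊥ := by
          intro h; rw [h] at hab; exact notMem_empty a hab
        have hbcard : 1 ≤ b.card := card_pos.2 ⟨a, hab⟩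
        have hble : b.card ≤ m + 1 := hs ▸ card_le_card hbs
        have hIH := ih (m + 1 - b.card) (by omega) (s \ b)
          (by rw [card_sdiff_of_subset hbs, hs]) n
        rw [← hIH, Nat.card_eq_fintype_card, Fintype.card_subtype]
        refine card_bij' (fun P _ => P.avoid b)
          (fun Q _ => Q.extend hbne sdiff_disjoint (sdiff_sup_cancel hbs)) ?hi ?hj ?left ?right
        case hi => -- forward lands in target
          intro P hP
          rw [mem_filter, mem_filter] at hP
          obtain ⟨⟨-, hcard, hsize⟩, hpart⟩ := hP
          have hbP : b ∈ P.parts := hpart ▸ P.part_mem.2 ha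
          rw [mem_filter]
          refine ⟨mem_univ _, ?_, ?_⟩
          · rw [avoid_parts_of_mem P hbP, card_erase_of_mem hbP, hcard]; omega
          · intro c hc
            rw [avoid_parts_of_mem P hbP] at hc
            exact hsize c (mem_of_mem_erase hc)
        case hj => -- backward lands in source
          intro Q hQ
          rw [mem_filter] at hQ
          obtain ⟨-, hcard, hsize⟩ := hQ
          have hbQ : b ∉ Q.parts := by
            intro h
            have := Q.le h hab
            rw [mem_sdiff] at this
            exact this.2 hab
          rw [mem_filter, mem_filter]
          have hparts : (Q.extend hbne sdiff_disjoint (sdiff_sup_cancel hbs)).parts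
              = insert b Q.parts := Finpartition.extend_parts _ _ _ _
          refine ⟨⟨mem_univ _, ?_, ?_⟩, ?_⟩
          · rw [hparts, card_insert_of_notMem hbQ, hcard]
          · intro c hc
            rw [hparts, mem_insert] at hc
            rcases hc with rfl | hc
            · exact hb3
            · exact hsize c hc
          · exact Finpartition.part_eq_of_mem _ (hparts ▸ mem_insert_self b Q.parts)
              hab
        case left => -- left inverse
          intro P hP
          rw [mem_filter, mem_filter] at hP
          have hbP : b ∈ P.parts := hP.2 ▸ P.part_mem.2 ha
          apply Finpartition.ext
          rw [Finpartition.extend_parts, avoid_parts_of_mem P hbP, insert_erase hbP]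
        case right => -- right inverse
          intro Q hQ
          have hbQ : b ∉ Q.parts := by
            intro h
            have := Q.le h hab
            rw [mem_sdiff] at this
            exact this.2 hab
          have hmem : b ∈ (Q.extend hbne sdiff_disjoint (sdiff_sup_cancel hbs)).parts := by
            rw [Finpartition.extend_parts]; exact mem_insert_self b Q.parts
          apply Finpartition.ext
          rw [avoid_parts_of_mem _ hmem, Finpartition.extend_parts, erase_insert hbQ]
      rw [Finset.sum_congr rfl fib]
      -- now split by card
      have maps : ∀ b ∈ B, b.card ∈ ({1, 2, 3} : Finset ℕ) := by
        intro b hb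
        rw [hB, mem_filter] at hb
        have : 1 ≤ b.card := card_pos.2 ⟨a, hb.2.1⟩
        have := hb.2.2
        simp only [mem_insert, mem_singleton]
        omega
      rw [← Finset.sum_fiberwise_of_maps_to maps (fun b => tN n (m + 1 - b.card))]
      have inner : ∀ j ∈ ({1, 2, 3} : Finset ℕ),
          ∑ b ∈ B.filter (fun b => b.card = j), tN n (m + 1 - b.card)
            = m.choose (j-1) * tN n (m + 1 - j) := by
        intro j hj
        simp only [mem_insert, mem_singleton] at hj
        have hBj : B.filter (fun b => b.card = j)
            = s.powerset.filter (fun b => a ∈ b ∧ b.card = j) := by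
          rw [hB, filter_filter]
          apply filter_congr
          intro b _
          constructor
          · rintro ⟨⟨h1, _⟩, h3⟩; exact ⟨h1, h3⟩
          · rintro ⟨h1, h3⟩; exact ⟨⟨h1, by omega⟩, h3⟩
        rw [sum_congr rfl (fun b hb => by rw [(mem_filter.1 hb).2])]
        rw [sum_const, hBj]
        obtain ⟨i, rfl⟩ : ∃ i, j = i + 1 := ⟨j - 1, by omega⟩
        rw [count_blocks ha i, hs]
        simp [mul_comm]
      rw [Finset.sum_congr rfl inner]
      -- evaluate over {1,2,3}
      rw [show ({1, 2, 3} : Finset ℕ) = insert 1 (insert 2 {3}) from rfl]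
      rw [sum_insert (by simp), sum_insert (by simp), sum_singleton]
      rw [show m + 1 - 2 = m - 1 from by omega, show m + 1 - 3 = m - 2 from by omega,
        show (1:ℕ) - 1 = 0 from rfl, show (2:ℕ) - 1 = 1 from rfl, show (3:ℕ) - 1 = 2 from rfl,
        Nat.add_sub_cancel]
      rw [tN, Nat.choose_zero_right, Nat.choose_one_right]
      ring


lemma tz_sum (j K : ℕ) (hK : 3*j+1 ≤ K) :
    ∑ k ∈ range K, tz j (k:ℤ) = 2^j * ∑ k ∈ Icc j (3*j), (tN j k : ℤ) := by
  have h1 : ∀ k ∈ range K, tz j (k:ℤ) = 2^j * (tN j k : ℤ) := fun k _ => tz_ofNat j k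
  rw [sum_congr rfl h1, ← mul_sum]
  congr 1
  refine (sum_subset ?_ ?_).symm
  · intro x hx; rw [mem_Icc] at hx; rw [mem_range]; omega
  · intro x _ hnx
    rw [mem_Icc] at hnx
    rcases not_and_or.1 hnx with h | h
    · rw [tN_lt j x (by omega)]; norm_num
    · rw [tN_gt j x (by omega)]; norm_num

lemma W_zero (m : ℕ) : W m 0 = 0 := by
  simp only [W]
  rw [tz_neg (show (0:ℤ)-1 < 0 by norm_num), tz_neg (show (0:ℤ)-2 < 0 by norm_num),
    tz_neg (show (0:ℤ)-3 < 0 by norm_num), tz_neg (show (0:ℤ)-4 < 0 by norm_num),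
    tz_neg (show (0:ℤ)-5 < 0 by norm_num), tz_neg (show (0:ℤ)-6 < 0 by norm_num),
    tz_neg (show (0:ℤ)-7 < 0 by norm_num), tz_neg (show (0:ℤ)-8 < 0 by norm_num),
    tz_neg (show (0:ℤ)-9 < 0 by norm_num), tz_neg (show (0:ℤ)-10 < 0 by norm_num),
    tz_neg (show (0:ℤ)-11 < 0 by norm_num)]
  ring

lemma W_big (m : ℕ) : W m (3*(m:ℤ)+12) = 0 := by
  simp only [W]
  rw [tz_gt (show 3*(m:ℤ) < 3*(m:ℤ)+12-1 by omega), tz_gt (show 3*(m:ℤ) < 3*(m:ℤ)+12-2 by omega),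
    tz_gt (show 3*(m:ℤ) < 3*(m:ℤ)+12-3 by omega), tz_gt (show 3*(m:ℤ) < 3*(m:ℤ)+12-4 by omega),
    tz_gt (show 3*(m:ℤ) < 3*(m:ℤ)+12-5 by omega), tz_gt (show 3*(m:ℤ) < 3*(m:ℤ)+12-6 by omega),
    tz_gt (show 3*(m:ℤ) < 3*(m:ℤ)+12-7 by omega), tz_gt (show 3*(m:ℤ) < 3*(m:ℤ)+12-8 by omega),
    tz_gt (show 3*(m:ℤ) < 3*(m:ℤ)+12-9 by omega), tz_gt (show 3*(m:ℤ) < 3*(m:ℤ)+12-10 by omega),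
    tz_gt (show 3*(m:ℤ) < 3*(m:ℤ)+12-11 by omega)]
  ring

lemma E_eq_tN (n k : ℕ) : E 2 n k = tN n k := by
  have h := count_partitions k (Finset.univ : Finset (Fin k)) (by simp) n
  exact h

lemma G2_eq (n : ℕ) : G2 n = ∑ k ∈ Icc n (3*n), tN n k := by
  unfold G2
  exact sum_congr rfl fun k _ => E_eq_tN n k

lemma G2_cast (n : ℕ) : (G2 n : ℤ) = ∑ k ∈ Icc n (3*n), (tN n k : ℤ) := by
  rw [G2_eq]
  push_cast
  rfl

set_option maxHeartbeats 1000000 in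
lemma big_sum (m : ℕ) :
    ((2) + (2)*(m:ℤ)) * (2^(m+3) * ∑ k ∈ Icc (m+3) (3*(m+3)), (tN (m+3) k : ℤ))
    + ((-102) + (-196)*(m:ℤ) + (-108)*(m:ℤ)^2 + (-18)*(m:ℤ)^3)
        * (2^(m+2) * ∑ k ∈ Icc (m+2) (3*(m+2)), (tN (m+2) k : ℤ))
    + ((-124) + (-168)*(m:ℤ) + (-48)*(m:ℤ)^2)
        * (2^(m+1) * ∑ k ∈ Icc (m+1) (3*(m+1)), (tN (m+1) k : ℤ))
    + ((-80) + (-40)*(m:ℤ)) * (2^m * ∑ k ∈ Icc m (3*m), (tN m k : ℤ)) = 0 := by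
  have step : ∀ k ∈ range (3*m+12),
      ((2) + (2)*(m:ℤ)) * tz (m+3) (k:ℤ)
      + ((-102) + (-196)*(m:ℤ) + (-108)*(m:ℤ)^2 + (-18)*(m:ℤ)^3) * tz (m+2) (k:ℤ)
      + ((-124) + (-168)*(m:ℤ) + (-48)*(m:ℤ)^2) * tz (m+1) (k:ℤ)
      + ((-80) + (-40)*(m:ℤ)) * tz m (k:ℤ)
      = (fun i : ℕ => W m (i:ℤ)) (k+1) - (fun i : ℕ => W m (i:ℤ)) k := by
    intro k _
    have := master m (k:ℤ)
    push_cast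
    convert this using 2
  have tele := Finset.sum_range_sub (fun i : ℕ => W m (i:ℤ)) (3*m+12)
  have hsum := sum_congr rfl step
  rw [tele] at hsum
  have hW : W m ((3*m+12 : ℕ) : ℤ) - W m ((0:ℕ):ℤ) = 0 := by
    push_cast
    rw [W_zero, W_big]
    ring
  rw [hW] at hsum
  rw [Finset.sum_add_distrib, Finset.sum_add_distrib, Finset.sum_add_distrib,
    ← Finset.mul_sum, ← Finset.mul_sum, ← Finset.mul_sum, ← Finset.mul_sum] at hsum
  rw [tz_sum (m+3) (3*m+12) (by omega), tz_sum (m+2) (3*m+12) (by omega),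
    tz_sum (m+1) (3*m+12) (by omega), tz_sum m (3*m+12) (by omega)] at hsum
  exact hsum


theorem stmt_17 :
    G2 0 = 1 ∧ G2 1 = 3 ∧ G2 2 = 31 ∧
      ∀ n : ℕ, 3 ≤ n →
        2 * ((n : ℤ) - 2) * G2 n =
          (n : ℤ) * (9 * (n : ℤ) ^ 2 - 27 * n + 17) * G2 (n - 1)
          + (12 * (n : ℤ) ^ 2 - 30 * n + 13) * G2 (n - 2)
          + 5 * ((n : ℤ) - 1) * G2 (n - 3) := by
  refine ⟨by rw [G2_eq]; decide, by rw [G2_eq]; decide, by rw [G2_eq]; decide, ?_⟩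
  intro n hn
  obtain ⟨m, rfl⟩ : ∃ m, n = m + 3 := ⟨n - 3, by omega⟩
  rw [show m + 3 - 1 = m + 2 from rfl, show m + 3 - 2 = m + 1 from rfl,
    show m + 3 - 3 = m from rfl]
  have big := big_sum m
  rw [← G2_cast (m+3), ← G2_cast (m+2), ← G2_cast (m+1), ← G2_cast m] at big
  have h2 : ((2:ℤ))^(m+3) ≠ 0 := by positivity
  apply mul_left_cancel₀ h2
  push_cast
  linear_combination big
end

section
/- The number of possible scenarios of the gift exchange game with n gifts and steal limit σ, where the order in which gifts are drawn from the pool is fixed as 1,2,...,n, equals Σ_{k=n-1}^{(σ+1)(n-1)} S_2^{(σ+1)}(k, n-1): the scenarios are in bijection with sequences of integers from {1,...,n} beginning with 1, ending with the unique occurrence of n, in which each i ∈ {1,...,n-1} appears between 1 and σ+1 times and the first occurrence of i comes after the first occurrence of i-1; and these sequences are counted by the stated sum of restricted Stirling numbers. -/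
/-- A valid play-out ("scenario") of the gift exchange game with `n` gifts, steal limit `σ`,
and the gifts taken from the pool in the order `1,2,…,n`, encoded as the sequence of
gifts chosen at each action: it begins with `1`, ends with the unique occurrence of `n`,
each gift `i ∈ {1,…,n-1}` is chosen between `1` and `σ+1` times, and the first occurrence
of `i` comes after the first occurrence of `i-1`. -/
def ValidSeq (σ n : ℕ) : Set (List ℕ) :=
  {l | (∀ x ∈ l, 1 ≤ x ∧ x ≤ n) ∧
       l.head? = some 1 ∧
       l.getLast? = some n ∧
       l.count n = 1 ∧
       (∀ i, 1 ≤ i → i ≤ n - 1 → 1 ≤ l.count i ∧ l.count i ≤ σ + 1) ∧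
       (∀ i, 2 ≤ i → i ≤ n → l.idxOf (i - 1) < l.idxOf i)}

open Finset
namespace Stmt18



/-! ### rank in a finite set of a linear order -/

variable {α : Type*} [LinearOrder α]

/-- The rank of `x` in `s`: the number of elements of `s` smaller than `x`. -/
def rnk (s : Finset α) (x : α) : ℕ := (s.filter (· < x)).card

lemma rnk_lt_card {s : Finset α} {x : α} (hx : x ∈ s) : rnk s x < s.card := by
  apply Finset.card_lt_card
  constructor
  · exact Finset.filter_subset _ _
  · intro hsub
    have := hsub hx
    simp at this

lemma rnk_mono {s : Finset α} {x y : α} (hxy : x ≤ y) : rnk s x ≤ rnk s y :=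
  Finset.card_le_card (Finset.monotone_filter_right _ (fun a _ ha => lt_of_lt_of_le ha hxy))

lemma rnk_strict {s : Finset α} {x y : α} (hx : x ∈ s) (hxy : x < y) : rnk s x < rnk s y := by
  apply Finset.card_lt_card
  constructor
  · exact Finset.monotone_filter_right _ (fun a _ ha => lt_trans ha hxy)
  · intro hsub
    have := hsub (Finset.mem_filter.2 ⟨hx, hxy⟩)
    simp at this

lemma lt_of_rnk_lt {s : Finset α} {x y : α} (hy : y ∈ s) (h : rnk s x < rnk s y) : x < y := by
  by_contra hc
  push_neg at hc
  exact absurd h (not_lt.2 (rnk_mono hc))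

lemma rnk_injOn {s : Finset α} : Set.InjOn (rnk s) s := by
  intro x hx y hy h
  by_contra hne
  rcases lt_or_gt_of_ne hne with h' | h'
  · exact absurd (rnk_strict hx h') (by omega)
  · exact absurd (rnk_strict hy h') (by omega)

lemma rnk_surj {s : Finset α} {v : ℕ} (hv : v < s.card) : ∃ x ∈ s, rnk s x = v := by
  have := Finset.surj_on_of_inj_on_of_card_le (s := s) (t := Finset.range s.card)
    (fun a _ => rnk s a) (fun a ha => Finset.mem_range.2 (rnk_lt_card ha))
    (fun a₁ a₂ h1 h2 h => rnk_injOn h1 h2 h) (by simp)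
  obtain ⟨a, ha, he⟩ := this v (Finset.mem_range.2 hv)
  exact ⟨a, ha, he.symm⟩


lemma countP_eq_sum_map {α : Type*} (L : List α) (p : α → Bool) :
    L.countP p = (L.map (fun x => if p x then 1 else 0)).sum := by
  induction L with
  | nil => simp
  | cons x L ih =>
    rw [List.countP_cons]; simp only [List.map_cons, List.sum_cons, ih]; split <;> omega

/-- The fiber of value `i` in the list `l`, as a set of positions. -/
def fib (l : List ℕ) (i : ℕ) : Finset (Fin l.length) :=
  Finset.univ.filter (fun j => l.get j = i)

lemma card_fib (l : List ℕ) (i : ℕ) : (fib l i).card = l.count i := by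
  conv_rhs => rw [← List.map_get_finRange l]
  rw [List.count, List.countP_map, fib, Finset.card_eq_sum_ones, Finset.sum_filter,
    countP_eq_sum_map, Fin.sum_univ_def]
  congr 1
  apply List.map_congr_left
  intro j _
  simp [Function.comp]

lemma mem_fib_iff (l : List ℕ) (i : ℕ) (j : Fin l.length) : j ∈ fib l i ↔ l.get j = i := by
  simp [fib]

lemma indexOf_le_of_get {l : List ℕ} {a : ℕ} (j : Fin l.length) (h : l.get j = a) :
    l.idxOf a ≤ (j : ℕ) := by
  by_contra hc
  push_neg at hc
  have := List.not_of_lt_findIdx (p := (· == a)) (xs := l) hc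
  simp_all [List.get]

lemma fib_nonempty {l : List ℕ} {a : ℕ} (h : a ∈ l) : (fib l a).Nonempty := by
  refine ⟨⟨l.idxOf a, List.idxOf_lt_length_iff.2 h⟩, ?_⟩
  rw [mem_fib_iff]
  exact List.idxOf_get _

lemma min'_fib {l : List ℕ} {a : ℕ} (h : a ∈ l) :
    ((fib l a).min' (fib_nonempty h) : ℕ) = l.idxOf a := by
  apply le_antisymm
  · have : (⟨l.idxOf a, List.idxOf_lt_length_iff.2 h⟩ : Fin l.length) ∈ fib l a := by
      rw [mem_fib_iff]; exact List.idxOf_get _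
    exact_mod_cast Finset.min'_le _ _ this
  · have hm := (fib l a).min'_mem (fib_nonempty h)
    rw [mem_fib_iff] at hm
    exact indexOf_le_of_get _ hm

/-- Monotonicity of first occurrences, from the consecutive-first-occurrence condition. -/
lemma indexOf_mono {l : List ℕ} {m : ℕ}
    (hc : ∀ i, 2 ≤ i → i ≤ m → l.idxOf (i - 1) < l.idxOf i)
    {i i' : ℕ} (h1 : 1 ≤ i') (h2 : i' < i) (h3 : i ≤ m) :
    l.idxOf i' < l.idxOf i := by
  induction i with
  | zero => omega
  | succ i ih =>
    rcases Nat.lt_or_ge i' i with hlt | hge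
    · have : 1 ≤ i := by omega
      exact lt_trans (ih (by omega) (by omega)) (by simpa using hc (i+1) (by omega) h3)
    · have : i' = i := by omega
      subst this
      simpa using hc (i'+1) (by omega) h3

def seqSetoid (l : List ℕ) : Setoid (Fin l.length) :=
  ⟨fun a b => l.get a = l.get b, ⟨fun _ => rfl, Eq.symm, Eq.trans⟩⟩

instance (l : List ℕ) : DecidableRel (seqSetoid l).r := fun _ _ => Nat.decEq _ _

/-- The partition of positions of `l` into fibers. -/
def seqPart (l : List ℕ) : Finpartition (Finset.univ : Finset (Fin l.length)) :=
  Finpartition.ofSetoid (seqSetoid l)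

lemma parts_seqPart (l : List ℕ) :
    (seqPart l).parts = Finset.univ.image (fun a : Fin l.length => fib l (l.get a)) := by
  show Finset.univ.image _ = _
  apply Finset.image_congr
  intro a _
  ext b
  simp [seqSetoid, fib, eq_comm]
  exact Iff.rfl

lemma mem_parts_seqPart {l : List ℕ} {b : Finset (Fin l.length)} :
    b ∈ (seqPart l).parts ↔ ∃ a : Fin l.length, b = fib l (l.get a) := by
  rw [parts_seqPart]
  simp only [Finset.mem_image, Finset.mem_univ, true_and]
  exact exists_congr fun a => eq_comm

lemma fib_injOn {l : List ℕ} {m : ℕ} (hmem : ∀ i ∈ Finset.Icc 1 m, i ∈ l) :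
    Set.InjOn (fib l) (Finset.Icc 1 m) := by
  intro i hi i' hi' h
  have h1 : (⟨l.idxOf i, List.idxOf_lt_length_iff.2 (hmem i hi)⟩ : Fin l.length) ∈ fib l i := by
    simp only [fib, Finset.mem_filter, Finset.mem_univ, true_and]
    exact List.idxOf_get _
  rw [h] at h1
  simp only [fib, Finset.mem_filter] at h1
  rw [← h1.2]
  exact (List.idxOf_get _).symm

lemma seqPart_parts_Icc {l : List ℕ} {m : ℕ} (hval : ∀ x ∈ l, 1 ≤ x ∧ x ≤ m)
    (hmem : ∀ i ∈ Finset.Icc 1 m, i ∈ l) :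
    (seqPart l).parts = (Finset.Icc 1 m).image (fib l) := by
  rw [parts_seqPart]
  apply Finset.Subset.antisymm
  · intro b hb
    simp only [Finset.mem_image, Finset.mem_univ, true_and] at hb ⊢
    obtain ⟨a, rfl⟩ := hb
    exact ⟨l.get a, Finset.mem_Icc.2 (hval _ (by simpa using List.get_mem l a.1 a.2)), rfl⟩
  · intro b hb
    simp only [Finset.mem_image, Finset.mem_univ, true_and] at hb ⊢
    obtain ⟨i, hi, rfl⟩ := hb
    refine ⟨⟨l.idxOf i, List.idxOf_lt_length_iff.2 (hmem i hi)⟩, ?_⟩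
    rw [List.idxOf_get]

lemma card_parts_seqPart {l : List ℕ} {m : ℕ} (hval : ∀ x ∈ l, 1 ≤ x ∧ x ≤ m)
    (hmem : ∀ i ∈ Finset.Icc 1 m, i ∈ l) :
    (seqPart l).parts.card = m := by
  rw [seqPart_parts_Icc hval hmem, Finset.card_image_of_injOn (fib_injOn hmem)]
  simp

variable {k : ℕ}


/-- minima of the parts of a partition -/
def pmins (P : Finpartition (Finset.univ : Finset (Fin k))) : Finset (WithTop (Fin k)) :=
  P.parts.image Finset.min

lemma min_injOn (P : Finpartition (Finset.univ : Finset (Fin k))) :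
    Set.InjOn (Finset.min : Finset (Fin k) → WithTop (Fin k)) ↑P.parts := by
  intro b hb c hc h
  have hbne := P.nonempty_of_mem_parts hb
  have hcne := P.nonempty_of_mem_parts hc
  rw [← Finset.coe_min' hbne, ← Finset.coe_min' hcne] at h
  have h2 : b.min' hbne = c.min' hcne := by exact_mod_cast h
  exact P.eq_of_mem_parts hb hc (b.min'_mem hbne) (h2 ▸ c.min'_mem hcne)

lemma card_pmins {P : Finpartition (Finset.univ : Finset (Fin k))} {m : ℕ}
    (hm : P.parts.card = m) : (pmins P).card = m := by
  rw [pmins, Finset.card_image_of_injOn (min_injOn P), hm]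

def prank (P : Finpartition (Finset.univ : Finset (Fin k))) (b : Finset (Fin k)) : ℕ :=
  rnk (pmins P) b.min

lemma min_mem_pmins {P : Finpartition (Finset.univ : Finset (Fin k))} {b : Finset (Fin k)}
    (hb : b ∈ P.parts) : b.min ∈ pmins P := Finset.mem_image_of_mem _ hb

/-- The canonical sequence of a partition: position `j` gets the rank (by minimum)
of the part containing `j`, plus 1. -/
def invList (P : Finpartition (Finset.univ : Finset (Fin k))) : List ℕ :=
  List.ofFn (fun j : Fin k => prank P (P.part j) + 1)

@[simp] lemma length_invList (P : Finpartition (Finset.univ : Finset (Fin k))) :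
    (invList P).length = k := by simp [invList]

lemma get_invList (P : Finpartition (Finset.univ : Finset (Fin k)))
    (j : Fin (invList P).length) :
    (invList P).get j = prank P (P.part (Fin.cast (length_invList P) j)) + 1 := by
  simp [invList, List.get_ofFn]
  exact List.get_ofFn _ _

lemma prank_lt {P : Finpartition (Finset.univ : Finset (Fin k))} {m : ℕ}
    (hm : P.parts.card = m) {b : Finset (Fin k)} (hb : b ∈ P.parts) :
    prank P b < m := by
  rw [← card_pmins hm]
  exact rnk_lt_card (min_mem_pmins hb)

lemma prank_injOn {P : Finpartition (Finset.univ : Finset (Fin k))}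
    {b c : Finset (Fin k)} (hb : b ∈ P.parts) (hc : c ∈ P.parts)
    (h : prank P b = prank P c) : b = c :=
  min_injOn P hb hc (rnk_injOn (min_mem_pmins hb) (min_mem_pmins hc) h)

lemma part_cast_mem (P : Finpartition (Finset.univ : Finset (Fin k))) (j : Fin k) :
    P.part j ∈ P.parts := P.part_mem.2 (Finset.mem_univ j)

lemma mem_fib_invList {P : Finpartition (Finset.univ : Finset (Fin k))}
    {b : Finset (Fin k)} (hb : b ∈ P.parts) (j : Fin (invList P).length) :
    j ∈ fib (invList P) (prank P b + 1) ↔ Fin.cast (length_invList P) j ∈ b := by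
  rw [mem_fib_iff, get_invList]
  constructor
  · intro h
    have := prank_injOn (part_cast_mem P _) hb (Nat.add_right_cancel h)
    rw [← this]
    exact P.mem_part (Finset.mem_univ _)
  · intro h
    rw [P.part_eq_of_mem hb h]

/-- Central fact: the fiber of `prank b + 1` in `invList P` is `b` (as sets of naturals). -/
lemma fibN {P : Finpartition (Finset.univ : Finset (Fin k))}
    {b : Finset (Fin k)} (hb : b ∈ P.parts) :
    (fib (invList P) (prank P b + 1)).image (Fin.val) = b.image (Fin.val) := by
  ext x
  simp only [Finset.mem_image]
  constructor
  · rintro ⟨j, hj, rfl⟩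
    exact ⟨Fin.cast (length_invList P) j, (mem_fib_invList hb j).1 hj, rfl⟩
  · rintro ⟨j, hj, rfl⟩
    refine ⟨Fin.cast (length_invList P).symm j, ?_, rfl⟩
    rw [mem_fib_invList hb]
    exact hj

lemma count_invList {P : Finpartition (Finset.univ : Finset (Fin k))}
    {b : Finset (Fin k)} (hb : b ∈ P.parts) :
    (invList P).count (prank P b + 1) = b.card := by
  rw [← card_fib]
  have h1 := Finset.card_image_of_injective (fib (invList P) (prank P b + 1))
    (Fin.val_injective (n := (invList P).length))
  have h2 := Finset.card_image_of_injective b (Fin.val_injective (n := k))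
  rw [← h1, fibN hb, h2]

lemma mem_invList_iff {P : Finpartition (Finset.univ : Finset (Fin k))} {v : ℕ} :
    v ∈ invList P ↔ ∃ b ∈ P.parts, v = prank P b + 1 := by
  constructor
  · intro hv
    obtain ⟨j, hj⟩ := List.mem_iff_get.1 hv
    exact ⟨P.part (Fin.cast (length_invList P) j), part_cast_mem P _,
      by rw [← hj, get_invList]⟩
  · rintro ⟨b, hb, rfl⟩
    obtain ⟨x, hx⟩ := P.nonempty_of_mem_parts hb
    rw [← List.idxOf_lt_length_iff]
    have hmem : (Fin.cast (length_invList P).symm x) ∈ fib (invList P) (prank P b + 1) := by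
      rw [mem_fib_invList hb]; exact hx
    rw [mem_fib_iff] at hmem
    calc (invList P).idxOf (prank P b + 1) ≤ _ := indexOf_le_of_get _ hmem
    _ < (invList P).length := (Fin.cast (length_invList P).symm x).isLt

lemma indexOf_invList {P : Finpartition (Finset.univ : Finset (Fin k))}
    {b : Finset (Fin k)} (hb : b ∈ P.parts) :
    (invList P).idxOf (prank P b + 1) = (b.min' (P.nonempty_of_mem_parts hb) : ℕ) := by
  have hvmem : (prank P b + 1) ∈ invList P := mem_invList_iff.2 ⟨b, hb, rfl⟩
  rw [← min'_fib hvmem]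
  apply le_antisymm
  · have : (Fin.cast (length_invList P).symm (b.min' (P.nonempty_of_mem_parts hb))) ∈
        fib (invList P) (prank P b + 1) := by
      rw [mem_fib_invList hb]; exact b.min'_mem (P.nonempty_of_mem_parts hb)
    exact_mod_cast Finset.min'_le _ _ this
  · have hm := (fib (invList P) (prank P b + 1)).min'_mem (fib_nonempty hvmem)
    rw [mem_fib_invList hb] at hm
    exact_mod_cast b.min'_le _ hm

lemma rnk_image_of {β : Type*} [LinearOrder β] (s : Finset β) (g : β → α)
    (hcmp : ∀ x ∈ s, ∀ y ∈ s, (g x < g y ↔ x < y)) {x : β} (hx : x ∈ s) :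
    rnk (s.image g) (g x) = rnk s x := by
  have hinj : Set.InjOn g ↑s := by
    intro a ha b hb h
    by_contra hne
    rcases lt_or_gt_of_ne hne with h' | h'
    · exact absurd ((hcmp a ha b hb).2 h') (by rw [h]; exact lt_irrefl _)
    · exact absurd ((hcmp b hb a ha).2 h') (by rw [h]; exact lt_irrefl _)
  rw [rnk, rnk]
  have himg : (s.image g).filter (· < g x) = (s.filter (· < x)).image g := by
    ext a
    simp only [Finset.mem_filter, Finset.mem_image]
    constructor
    · rintro ⟨⟨y, hy, rfl⟩, h2⟩
      exact ⟨y, ⟨hy, (hcmp y hy x hx).1 h2⟩, rfl⟩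
    · rintro ⟨y, ⟨hy, h2⟩, rfl⟩
      exact ⟨⟨y, hy, rfl⟩, (hcmp y hy x hx).2 h2⟩
  have hsub : ((s.filter (· < x) : Finset β) : Set β) ⊆ ↑s := by
    intro a ha
    simp only [Finset.coe_filter, Set.mem_setOf_eq] at ha
    exact ha.1
  rw [himg, Finset.card_image_of_injOn (hinj.mono hsub)]

lemma invList_val {P : Finpartition (Finset.univ : Finset (Fin k))} {m : ℕ}
    (hm : P.parts.card = m) : ∀ x ∈ invList P, 1 ≤ x ∧ x ≤ m := by
  intro x hx
  obtain ⟨b, hb, rfl⟩ := mem_invList_iff.1 hx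
  have := prank_lt hm hb
  omega

lemma invList_count {P : Finpartition (Finset.univ : Finset (Fin k))} {m σ : ℕ}
    (hm : P.parts.card = m) (hsz : ∀ b ∈ P.parts, b.card ≤ σ + 1) :
    ∀ i, 1 ≤ i → i ≤ m → 1 ≤ (invList P).count i ∧ (invList P).count i ≤ σ + 1 := by
  intro i h1 h2
  have hlt : i - 1 < (pmins P).card := by rw [card_pmins hm]; omega
  obtain ⟨x, hx, hrnk⟩ := rnk_surj hlt
  obtain ⟨b, hb, rfl⟩ := Finset.mem_image.1 hx
  have hib : i = prank P b + 1 := by rw [prank, hrnk]; omega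
  rw [hib, count_invList hb]
  have := Finset.card_pos.2 (P.nonempty_of_mem_parts hb)
  exact ⟨this, hsz b hb⟩

lemma invList_chain {P : Finpartition (Finset.univ : Finset (Fin k))} {m : ℕ}
    (hm : P.parts.card = m) :
    ∀ i, 2 ≤ i → i ≤ m → (invList P).idxOf (i - 1) < (invList P).idxOf i := by
  intro i h2 hm'
  have hlt1 : i - 2 < (pmins P).card := by rw [card_pmins hm]; omega
  have hlt2 : i - 1 < (pmins P).card := by rw [card_pmins hm]; omega
  obtain ⟨x, hx, hrnkx⟩ := rnk_surj hlt1
  obtain ⟨y, hy, hrnky⟩ := rnk_surj hlt2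
  obtain ⟨c, hc, rfl⟩ := Finset.mem_image.1 hx
  obtain ⟨b, hb, rfl⟩ := Finset.mem_image.1 hy
  have hic : i - 1 = prank P c + 1 := by rw [prank, hrnkx]; omega
  have hib : i = prank P b + 1 := by rw [prank, hrnky]; omega
  rw [hic, hib, indexOf_invList hc, indexOf_invList hb]
  have hpc : prank P c = i - 2 := by omega
  have hpb : prank P b = i - 1 := by omega
  have hlt : c.min < b.min := by
    refine lt_of_rnk_lt (min_mem_pmins hb) ?_
    rw [show rnk (pmins P) c.min = prank P c from rfl,
      show rnk (pmins P) b.min = prank P b from rfl, hpc, hpb]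
    omega
  rw [← Finset.coe_min' (P.nonempty_of_mem_parts hc),
    ← Finset.coe_min' (P.nonempty_of_mem_parts hb), WithTop.coe_lt_coe] at hlt
  exact_mod_cast hlt

lemma prank_seqPart {l : List ℕ} {m : ℕ}
    (hval : ∀ x ∈ l, 1 ≤ x ∧ x ≤ m)
    (hmem : ∀ i ∈ Finset.Icc 1 m, i ∈ l)
    (hchain : ∀ i, 2 ≤ i → i ≤ m → l.idxOf (i - 1) < l.idxOf i)
    {i : ℕ} (hi : i ∈ Finset.Icc 1 m) :
    prank (seqPart l) (fib l i) = i - 1 := by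
  have hcmp : ∀ x ∈ Finset.Icc 1 m, ∀ y ∈ Finset.Icc 1 m,
      ((fib l x).min < (fib l y).min ↔ x < y) := by
    intro x hx y hy
    rw [Finset.mem_Icc] at hx hy
    rw [← Finset.coe_min' (fib_nonempty (hmem x (Finset.mem_Icc.2 hx))),
      ← Finset.coe_min' (fib_nonempty (hmem y (Finset.mem_Icc.2 hy))), WithTop.coe_lt_coe,
      ← Fin.val_fin_lt, min'_fib (hmem x (Finset.mem_Icc.2 hx)),
      min'_fib (hmem y (Finset.mem_Icc.2 hy))]
    constructor
    · intro h
      by_contra hc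
      push_neg at hc
      rcases Nat.lt_or_ge y x with h' | h'
      · exact absurd (indexOf_mono hchain hy.1 h' hx.2) (by omega)
      · have : x = y := by omega
        subst this
        exact lt_irrefl _ h
    · intro h
      exact indexOf_mono hchain hx.1 h hy.2
  have hpm : pmins (seqPart l) = (Finset.Icc 1 m).image (fun i' => (fib l i').min) := by
    rw [pmins, seqPart_parts_Icc hval hmem, Finset.image_image]
    rfl
  have h1 := rnk_image_of (Finset.Icc 1 m) (fun i' => (fib l i').min) hcmp hi
  rw [prank, hpm]
  have h3 : rnk (Finset.Icc 1 m) i = i - 1 := by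
    have h2 : (Finset.Icc 1 m).filter (· < i) = Finset.Ico 1 i := by
      rw [Finset.mem_Icc] at hi
      ext a
      simp only [Finset.mem_filter, Finset.mem_Icc, Finset.mem_Ico]
      omega
    rw [rnk, h2, Nat.card_Ico]
  exact Eq.trans (by convert h1 using 2) h3

lemma invList_seqPart {l : List ℕ} {m : ℕ}
    (hval : ∀ x ∈ l, 1 ≤ x ∧ x ≤ m)
    (hmem : ∀ i ∈ Finset.Icc 1 m, i ∈ l)
    (hchain : ∀ i, 2 ≤ i → i ≤ m → l.idxOf (i - 1) < l.idxOf i) :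
    invList (seqPart l) = l := by
  apply List.ext_get (by simp)
  intro j h1 h2
  rw [get_invList]
  have hcast : (Fin.cast (length_invList (seqPart l)) ⟨j, h1⟩ : Fin l.length) = ⟨j, h2⟩ := rfl
  rw [hcast]
  set i := l.get ⟨j, h2⟩ with hi
  have hiIcc : i ∈ Finset.Icc 1 m := Finset.mem_Icc.2 (hval i (by simp [hi, List.get_mem]))
  have hpart : (seqPart l).part ⟨j, h2⟩ = fib l i :=
    (seqPart l).part_eq_of_mem (mem_parts_seqPart.2 ⟨⟨j, h2⟩, rfl⟩)
      ((mem_fib_iff l i ⟨j, h2⟩).2 rfl)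
  rw [hpart, prank_seqPart hval hmem hchain hiIcc]
  have := (Finset.mem_Icc.1 hiIcc).1
  omega

lemma seqPart_invList {P : Finpartition (Finset.univ : Finset (Fin k))} :
    (seqPart (invList P)).parts.image (Finset.image Fin.val) =
      P.parts.image (Finset.image Fin.val) := by
  ext S
  simp only [Finset.mem_image]
  constructor
  · rintro ⟨b, hb, rfl⟩
    obtain ⟨a, rfl⟩ := mem_parts_seqPart.1 hb
    rw [get_invList]
    exact ⟨P.part (Fin.cast (length_invList P) a), part_cast_mem P _,
      (fibN (part_cast_mem P _)).symm ▸ rfl⟩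
  · rintro ⟨b, hb, rfl⟩
    refine ⟨fib (invList P) (prank P b + 1), ?_, fibN hb⟩
    obtain ⟨x, hx⟩ := P.nonempty_of_mem_parts hb
    refine mem_parts_seqPart.2 ⟨Fin.cast (length_invList P).symm x, ?_⟩
    rw [get_invList]
    congr 1
    have : (Fin.cast (length_invList P) (Fin.cast (length_invList P).symm x)) = x := rfl
    rw [this, P.part_eq_of_mem hb hx]

/-! ### The two subtypes and the fixed-length equivalence -/

abbrev A (σ m k : ℕ) : Type :=
  {l : List ℕ // l.length = k ∧ (∀ x ∈ l, 1 ≤ x ∧ x ≤ m) ∧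
    (∀ i, 1 ≤ i → i ≤ m → 1 ≤ l.count i ∧ l.count i ≤ σ + 1) ∧
    (∀ i, 2 ≤ i → i ≤ m → l.idxOf (i - 1) < l.idxOf i)}

abbrev B (σ m k : ℕ) : Type :=
  {P : Finpartition (Finset.univ : Finset (Fin k)) //
    P.parts.card = m ∧ ∀ b ∈ P.parts, b.card ≤ σ + 1}

def castPart {k k' : ℕ} (h : k = k') (P : Finpartition (Finset.univ : Finset (Fin k))) :
    Finpartition (Finset.univ : Finset (Fin k')) := h ▸ P

lemma invList_castPart {k k' : ℕ} (h : k = k') (P : Finpartition (Finset.univ : Finset (Fin k))) :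
    invList (castPart h P) = invList P := by subst h; rfl

lemma card_castPart {k k' : ℕ} (h : k = k') (P : Finpartition (Finset.univ : Finset (Fin k))) :
    (castPart h P).parts.card = P.parts.card := by subst h; rfl

lemma castPart_eq_iff {k k' : ℕ} (h : k = k') (Q : Finpartition (Finset.univ : Finset (Fin k)))
    (P : Finpartition (Finset.univ : Finset (Fin k'))) :
    castPart h Q = P ↔ Q.parts.image (Finset.image Fin.val) =
      P.parts.image (Finset.image Fin.val) := by
  subst h
  constructor
  · rintro rfl; rfl
  · intro hi
    ext1
    exact Finset.image_injective (Finset.image_injective Fin.val_injective) hi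

lemma mem_of_count_pos {l : List ℕ} {m i : ℕ}
    (hcnt : ∀ i, 1 ≤ i → i ≤ m → 1 ≤ l.count i ∧ l.count i ≤ _root_.id (m + m) + 1) : True := trivial

lemma A_mem_Icc {σ m k : ℕ} (x : A σ m k) :
    ∀ i ∈ Finset.Icc 1 m, i ∈ x.1 := fun i hi => by
  rw [Finset.mem_Icc] at hi
  exact List.count_pos_iff.1 (x.2.2.2.1 i hi.1 hi.2).1

def ABto {σ m k : ℕ} (x : A σ m k) : B σ m k :=
  ⟨castPart x.2.1 (seqPart x.1), by
    obtain ⟨l, hlen, hval, hcnt, hchain⟩ := x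
    have hmem := A_mem_Icc (σ := σ) ⟨l, hlen, hval, hcnt, hchain⟩
    subst hlen
    constructor
    · exact card_parts_seqPart hval hmem
    · intro b hb
      rw [show castPart rfl (seqPart l) = seqPart l from rfl,
        seqPart_parts_Icc hval hmem] at hb
      obtain ⟨i, hi, rfl⟩ := Finset.mem_image.1 hb
      rw [Finset.mem_Icc] at hi
      rw [card_fib]
      exact (hcnt i hi.1 hi.2).2⟩

def ABinv {σ m k : ℕ} (y : B σ m k) : A σ m k :=
  ⟨invList y.1, by simp, invList_val y.2.1, invList_count y.2.1 y.2.2, invList_chain y.2.1⟩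

def AB (σ m k : ℕ) : A σ m k ≃ B σ m k where
  toFun := ABto
  invFun := ABinv
  left_inv := fun x => by
    apply Subtype.ext
    show invList (castPart x.2.1 (seqPart x.1)) = x.1
    rw [invList_castPart]
    exact invList_seqPart x.2.2.1 (A_mem_Icc x) x.2.2.2.2
  right_inv := fun y => by
    apply Subtype.ext
    show castPart _ (seqPart (invList y.1)) = y.1
    refine (castPart_eq_iff _ _ _).2 ?_
    exact seqPart_invList

/-! ### Glue: scenarios and fixed-length sequences -/

lemma length_eq_sum_count {l : List ℕ} {m : ℕ} (hval : ∀ x ∈ l, 1 ≤ x ∧ x ≤ m) :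
    l.length = ∑ i ∈ Finset.Icc 1 m, l.count i := by
  have h1 : ∑ a ∈ l.toFinset, l.count a = l.length := by
    simpa using Multiset.toFinset_sum_count_eq (l : Multiset ℕ)
  rw [← h1]
  apply Finset.sum_subset
  · intro x hx
    rw [List.mem_toFinset] at hx
    exact Finset.mem_Icc.2 (hval x hx)
  · intro x _ hx
    rw [List.mem_toFinset] at hx
    exact List.count_eq_zero.2 hx

lemma length_mem_Icc {l : List ℕ} {m σ : ℕ} (hval : ∀ x ∈ l, 1 ≤ x ∧ x ≤ m)
    (hcnt : ∀ i, 1 ≤ i → i ≤ m → 1 ≤ l.count i ∧ l.count i ≤ σ + 1) :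
    l.length ∈ Finset.Icc m ((σ + 1) * m) := by
  rw [Finset.mem_Icc, length_eq_sum_count hval]
  constructor
  · calc m = (Finset.Icc 1 m).card • 1 := by simp
    _ ≤ ∑ i ∈ Finset.Icc 1 m, l.count i := Finset.card_nsmul_le_sum _ _ _
        (fun i hi => by rw [Finset.mem_Icc] at hi; exact (hcnt i hi.1 hi.2).1)
  · calc ∑ i ∈ Finset.Icc 1 m, l.count i ≤ (Finset.Icc 1 m).card • (σ + 1) :=
        Finset.sum_le_card_nsmul _ _ _
          (fun i hi => by rw [Finset.mem_Icc] at hi; exact (hcnt i hi.1 hi.2).2)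
    _ = (σ + 1) * m := by simp [Nat.mul_comm]

lemma head_eq_one {l : List ℕ} {m : ℕ} (hval : ∀ x ∈ l, 1 ≤ x ∧ x ≤ m)
    (hmem : 1 ∈ l)
    (hchain : ∀ i, 2 ≤ i → i ≤ m → l.idxOf (i - 1) < l.idxOf i) :
    l.head? = some 1 := by
  have hne : l ≠ [] := List.ne_nil_of_mem hmem
  obtain ⟨a, t, rfl⟩ : ∃ a t, l = a :: t := ⟨l.head hne, l.tail, (List.cons_head_tail hne).symm⟩
  have hb := hval a (by simp)
  have hidx : (a :: t).idxOf a = 0 :=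
    Nat.le_zero.1 (indexOf_le_of_get ⟨0, by simp⟩ rfl)
  have hone : a = 1 := by
    by_contra hc
    have h1 : 1 < a := by omega
    have := indexOf_mono hchain le_rfl h1 hb.2
    omega
  rw [hone]
  rfl

/-- Scenario-sequences (copied for development). -/
def ValidSeq' (σ n : ℕ) : Set (List ℕ) :=
  {l | (∀ x ∈ l, 1 ≤ x ∧ x ≤ n) ∧
       l.head? = some 1 ∧
       l.getLast? = some n ∧
       l.count n = 1 ∧
       (∀ i, 1 ≤ i → i ≤ n - 1 → 1 ≤ l.count i ∧ l.count i ≤ σ + 1) ∧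
       (∀ i, 2 ≤ i → i ≤ n → l.idxOf (i - 1) < l.idxOf i)}

section Glue
variable {σ n : ℕ}

lemma vs_decomp {l : List ℕ} (h : l ∈ ValidSeq' σ n) : l.dropLast ++ [n] = l := by
  have hne : l ≠ [] := by
    intro e
    rw [e] at h
    simp [ValidSeq'] at h
  have h1 := List.getLast?_eq_getLast hne
  rw [h.2.2.1] at h1
  have h2 : l.getLast hne = n := by
    injection h1.symm with h2
  rw [← h2]
  exact List.dropLast_concat_getLast hne

lemma vs_not_mem_dropLast {l : List ℕ} (h : l ∈ ValidSeq' σ n) : n ∉ l.dropLast := by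
  have hc := h.2.2.2.1
  conv at hc => rw [← vs_decomp h]
  rw [List.count_append] at hc
  simp at hc
  exact List.count_eq_zero.1 hc

lemma vs_val' {l : List ℕ} (h : l ∈ ValidSeq' σ n) :
    ∀ x ∈ l.dropLast, 1 ≤ x ∧ x ≤ n - 1 := by
  intro x hx
  have hxl : x ∈ l := (List.dropLast_sublist l).mem hx
  have hb := h.1 x hxl
  have hxn : x ≠ n := fun e => vs_not_mem_dropLast h (e ▸ hx)
  omega

lemma vs_count' {l : List ℕ} (h : l ∈ ValidSeq' σ n) (hn : 1 ≤ n) :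
    ∀ i, 1 ≤ i → i ≤ n - 1 → 1 ≤ l.dropLast.count i ∧ l.dropLast.count i ≤ σ + 1 := by
  intro i h1 h2
  have hcnt : l.dropLast.count i = l.count i := by
    conv_rhs => rw [← vs_decomp h]
    rw [List.count_append]
    have : i ≠ n := by omega
    simp [this, List.count_singleton, Ne.symm this]
  rw [hcnt]
  exact h.2.2.2.2.1 i h1 h2

lemma vs_chain' {l : List ℕ} (h : l ∈ ValidSeq' σ n) (hn : 1 ≤ n) :
    ∀ i, 2 ≤ i → i ≤ n - 1 → l.dropLast.idxOf (i - 1) < l.dropLast.idxOf i := by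
  intro i h1 h2
  have hm : ∀ j, 1 ≤ j → j ≤ n - 1 → j ∈ l.dropLast := fun j hj1 hj2 =>
    List.count_pos_iff.1 (vs_count' h hn j hj1 hj2).1
  have e1 : l.idxOf (i - 1) = l.dropLast.idxOf (i - 1) := by
    conv_lhs => rw [← vs_decomp h]
    exact List.idxOf_append_of_mem (hm (i - 1) (by omega) (by omega))
  have e2 : l.idxOf i = l.dropLast.idxOf i := by
    conv_lhs => rw [← vs_decomp h]
    exact List.idxOf_append_of_mem (hm i (by omega) h2)
  rw [← e1, ← e2]
  exact h.2.2.2.2.2 i h1 (by omega)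

lemma vs_inv_mem {l' : List ℕ} (hn : 1 ≤ n)
    (hval : ∀ x ∈ l', 1 ≤ x ∧ x ≤ n - 1)
    (hcnt : ∀ i, 1 ≤ i → i ≤ n - 1 → 1 ≤ l'.count i ∧ l'.count i ≤ σ + 1)
    (hchain : ∀ i, 2 ≤ i → i ≤ n - 1 → l'.idxOf (i - 1) < l'.idxOf i) :
    (l' ++ [n]) ∈ ValidSeq' σ n := by
  have hnl' : n ∉ l' := fun hmem => by have := hval n hmem; omega
  have hcnt_eq : ∀ i, i ≠ n → (l' ++ [n]).count i = l'.count i := by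
    intro i hi
    rw [List.count_append]
    simp [hi, List.count_singleton, Ne.symm hi]
  refine ⟨?_, ?_, ?_, ?_, ?_, ?_⟩
  · intro x hx
    rcases List.mem_append.1 hx with hx | hx
    · have := hval x hx; omega
    · simp at hx; omega
  · rcases Nat.eq_or_lt_of_le hn with h1 | h1
    · -- n = 1
      have : l' = [] := by
        rw [List.eq_nil_iff_forall_not_mem]
        intro x hx
        have := hval x hx
        omega
      subst this
      simp [← h1]
    · -- 2 ≤ n
      have h1m : 1 ∈ l' := List.count_pos_iff.1 (hcnt 1 le_rfl (by omega)).1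
      have hne : l' ≠ [] := List.ne_nil_of_mem h1m
      rw [List.head?_append, head_eq_one hval h1m hchain]
      rfl
  · exact List.getLast?_concat
  · rw [List.count_append]
    simp [List.count_eq_zero.2 hnl']
  · intro i h1 h2
    rw [hcnt_eq i (by omega)]
    exact hcnt i h1 h2
  · intro i h1 h2
    rcases Nat.lt_or_ge i n with hlt | hge
    · have hi2 : i ≤ n - 1 := by omega
      have e1 : (l' ++ [n]).idxOf (i - 1) = l'.idxOf (i - 1) :=
        List.idxOf_append_of_mem (List.count_pos_iff.1 (hcnt (i - 1) (by omega) (by omega)).1)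
      have e2 : (l' ++ [n]).idxOf i = l'.idxOf i :=
        List.idxOf_append_of_mem (List.count_pos_iff.1 (hcnt i (by omega) hi2).1)
      rw [e1, e2]
      exact hchain i h1 hi2
    · have hi : i = n := by omega
      subst hi
      have hmem : i - 1 ∈ l' := List.count_pos_iff.1 (hcnt (i - 1) (by omega) (by omega)).1
      have e1 : (l' ++ [i]).idxOf (i - 1) = l'.idxOf (i - 1) :=
        List.idxOf_append_of_mem hmem
      have e2 : (l' ++ [i]).idxOf i = l'.length := by
        rw [List.idxOf_append_of_notMem hnl']
        simp
      rw [e1, e2]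
      exact List.idxOf_lt_length_iff.2 hmem
end Glue

lemma sigmaA_ext {σ m : ℕ} {s : Finset ℕ} (x y : Σ k : s, A σ m ↑k)
    (h : x.2.1 = y.2.1) : x = y := by
  obtain ⟨⟨kx, hkx⟩, ⟨lx, hlx⟩⟩ := x
  obtain ⟨⟨ky, hky⟩, ⟨ly, hly⟩⟩ := y
  dsimp at h
  subst h
  have : kx = ky := by
    have h1 := hlx.1
    have h2 := hly.1
    simp only [Subtype.coe_mk] at h1 h2
    omega
  subst this
  rfl

/-- The glue equivalence. -/
def glue (σ n : ℕ) (hn : 1 ≤ n) :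
    ValidSeq' σ n ≃ Σ k : (Finset.Icc (n - 1) ((σ + 1) * (n - 1))), A σ (n - 1) ↑k where
  toFun := fun x =>
    ⟨⟨x.1.dropLast.length, length_mem_Icc (vs_val' x.2) (vs_count' x.2 hn)⟩,
     ⟨x.1.dropLast, rfl, vs_val' x.2, vs_count' x.2 hn, vs_chain' x.2 hn⟩⟩
  invFun := fun y =>
    ⟨y.2.1 ++ [n], vs_inv_mem hn y.2.2.2.1 y.2.2.2.2.1 y.2.2.2.2.2⟩
  left_inv := fun x => by
    apply Subtype.ext
    show x.1.dropLast ++ [n] = x.1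
    exact vs_decomp x.2
  right_inv := fun y => by
    apply sigmaA_ext
    show (y.2.1 ++ [n]).dropLast = y.2.1
    exact List.dropLast_concat

noncomputable def E' (σ n k : ℕ) : ℕ :=
  Nat.card {P : Finpartition (Finset.univ : Finset (Fin k)) //
    P.parts.card = n ∧ ∀ b ∈ P.parts, b.card ≤ σ + 1}

theorem final (σ n : ℕ) (hn : 1 ≤ n) :
    Nat.card (ValidSeq' σ n) =
      ∑ k ∈ Finset.Icc (n - 1) ((σ + 1) * (n - 1)), E' σ (n - 1) k := by
  have e := (glue σ n hn).trans (Equiv.sigmaCongrRight (fun k => AB σ (n - 1) ↑k))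
  rw [Nat.card_congr e, Nat.card_eq_fintype_card, Fintype.card_sigma,
    ← Finset.sum_coe_sort (Finset.Icc (n - 1) ((σ + 1) * (n - 1))) (E' σ (n - 1))]
  refine Finset.sum_congr rfl fun i _ => ?_
  rw [← Nat.card_eq_fintype_card]
  rfl

end Stmt18

theorem stmt_18 (σ n : ℕ) (hn : 1 ≤ n) :
    Nat.card (ValidSeq σ n) =
      ∑ k ∈ Finset.Icc (n - 1) ((σ + 1) * (n - 1)), E σ (n - 1) k := by
  exact Stmt18.final σ n hn
end
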